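/- arXiv:1808.01948 — 3 statements merged into one kernel-verified Lean document; each statement's English description precedes it below -/
import Mathlib

section
/- Let e^{-tL} be a semigroup with heat kernel p_t satisfying the Gaussian upper bound p_t(x,y) ≤ C V(x,√t)^{-1} exp(-d(x,y)²/(ct)) on a doubling space, and let h ≥ 0 satisfy the average decay (1/V(x,r)) ∫_{B(x,r)} h dμ ≤ C r^{-ε} for r > 1. Then for p ∈ (2,∞), p' = p/(p-1), and st > 1: ∫ p_{st}(x,y) h(y) |f(y)| dμ(y) ≤ C (st)^{-ε/(2p')} (∫ V(x,√{st})^{-1} e^{-d(x,y)²/(2cst)} |f(y)|^p dμ(y))^{1/p} for every f ∈ L^p and every x, provided h is bounded. -/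
open MeasureTheory Metric Real ENNReal

private lemma pow_div_fact_le_exp {x : ℝ} (hx : 0 ≤ x) (m : ℕ) :
    x ^ m / (m.factorial : ℝ) ≤ Real.exp x := by
  calc x ^ m / (m.factorial : ℝ) ≤ ∑ i ∈ Finset.range (m + 1), x ^ i / (i.factorial : ℝ) :=
        Finset.single_le_sum (f := fun i => x ^ i / (i.factorial : ℝ))
          (fun i _ => by positivity) (Finset.self_mem_range_succ m)
    _ ≤ Real.exp x := Real.sum_le_exp_of_nonneg hx _

private lemma opt_lemma {p q : ℝ} (hpq : Real.HolderConjugate p q) (eta I L : ℝ≥0∞)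
    (heta0 : eta ≠ 0) (hetat : eta ≠ ∞)
    (H : ∀ lam : ℝ≥0∞, lam ≠ 0 → lam ≠ ∞ → L ≤ lam ^ q * eta + lam ^ (-p) * I) :
    L ≤ 2 * eta ^ q⁻¹ * I ^ p⁻¹ := by
  have hq0 : q ≠ 0 := hpq.symm.ne_zero
  have hp0 : p ≠ 0 := hpq.ne_zero
  have hqpos : 0 < q := hpq.symm.pos
  have hppos : 0 < p := hpq.pos
  have hetaq0 : eta ^ q⁻¹ ≠ 0 := (ENNReal.rpow_pos heta0.bot_lt hetat).ne'
  by_cases hI : I = ∞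
  · rw [hI, ENNReal.top_rpow_of_pos (inv_pos.2 hppos),
      ENNReal.mul_top (mul_ne_zero two_ne_zero hetaq0)]
    exact le_top
  by_cases hI0 : I = 0
  · have hL : L ≤ 0 := by
      refine ENNReal.le_of_forall_pos_le_add fun δ hδ _ => ?_
      have hδ0 : (δ : ℝ≥0∞) ≠ 0 := by exact_mod_cast hδ.ne'
      have hδt : (δ : ℝ≥0∞) ≠ ∞ := ENNReal.coe_ne_top
      set lam : ℝ≥0∞ := ((δ : ℝ≥0∞) / eta) ^ q⁻¹ with hlam
      have hb0 : (δ : ℝ≥0∞) / eta ≠ 0 := by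
        simp [ENNReal.div_eq_zero_iff, hδ0, hetat]
      have hbt : (δ : ℝ≥0∞) / eta ≠ ∞ := by
        simp [ENNReal.div_eq_top, hδt, heta0]
      have hlam0 : lam ≠ 0 := (ENNReal.rpow_pos hb0.bot_lt hbt).ne'
      have hlamt : lam ≠ ∞ := ENNReal.rpow_ne_top_of_nonneg (by positivity) hbt
      have := H lam hlam0 hlamt
      rw [hI0, mul_zero, add_zero, hlam, ← ENNReal.rpow_mul,
        inv_mul_cancel₀ hq0, ENNReal.rpow_one,
        ENNReal.div_mul_cancel heta0 hetat] at this
      simpa using this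
    exact le_trans hL (zero_le)
  · have hb0 : I / eta ≠ 0 := by simp [ENNReal.div_eq_zero_iff, hI0, hetat]
    have hbt : I / eta ≠ ∞ := by simp [ENNReal.div_eq_top, hI, heta0]
    set lam : ℝ≥0∞ := (I / eta) ^ (p * q)⁻¹ with hlam
    have hlam0 : lam ≠ 0 := (ENNReal.rpow_pos hb0.bot_lt hbt).ne'
    have hlamt : lam ≠ ∞ := ENNReal.rpow_ne_top_of_nonneg (by positivity) hbt
    have hI0' : I ≠ 0 := hI0
    have hetap0 : eta ^ p⁻¹ ≠ 0 := (ENNReal.rpow_pos heta0.bot_lt hetat).ne'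
    have hetapt : eta ^ p⁻¹ ≠ ∞ := ENNReal.rpow_ne_top_of_nonneg (by positivity) hetat
    have hetaqt : eta ^ q⁻¹ ≠ ∞ := ENNReal.rpow_ne_top_of_nonneg (by positivity) hetat
    have hIq0 : I ^ q⁻¹ ≠ 0 := (ENNReal.rpow_pos hI0'.bot_lt hI).ne'
    have hIqt : I ^ q⁻¹ ≠ ∞ := ENNReal.rpow_ne_top_of_nonneg (by positivity) hI
    have hdiv_eta : eta / eta ^ p⁻¹ = eta ^ q⁻¹ := by
      rw [eq_comm, ENNReal.eq_div_iff hetap0 hetapt, ← ENNReal.rpow_add _ _ heta0 hetat,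
        hpq.inv_add_inv_eq_one, ENNReal.rpow_one]
    have hdiv_I : I / I ^ q⁻¹ = I ^ p⁻¹ := by
      rw [eq_comm, ENNReal.eq_div_iff hIq0 hIqt, ← ENNReal.rpow_add _ _ hI0' hI,
        add_comm q⁻¹ p⁻¹, hpq.inv_add_inv_eq_one, ENNReal.rpow_one]
    have h1 : lam ^ q * eta = I ^ p⁻¹ * eta ^ q⁻¹ := by
      rw [hlam, ← ENNReal.rpow_mul]
      have e1 : (p * q)⁻¹ * q = p⁻¹ := by field_simp; try ring
      rw [e1, ENNReal.div_rpow_of_nonneg _ _ (by positivity)]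
      have : I ^ p⁻¹ / eta ^ p⁻¹ * eta = I ^ p⁻¹ * (eta / eta ^ p⁻¹) := by
        simp only [div_eq_mul_inv]; ring
      rw [this, hdiv_eta]
    have h2 : lam ^ (-p) * I = eta ^ q⁻¹ * I ^ p⁻¹ := by
      rw [hlam, ← ENNReal.rpow_mul]
      have e2 : (p * q)⁻¹ * -p = -q⁻¹ := by field_simp; try ring
      rw [e2, ENNReal.rpow_neg, ENNReal.div_rpow_of_nonneg _ _ (by positivity),
        ENNReal.inv_div (Or.inl hetaqt) (Or.inl hetaq0)]
      have : eta ^ q⁻¹ / I ^ q⁻¹ * I = eta ^ q⁻¹ * (I / I ^ q⁻¹) := by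
        simp only [div_eq_mul_inv]; ring
      rw [this, hdiv_I]
    calc L ≤ lam ^ q * eta + lam ^ (-p) * I := H lam hlam0 hlamt
      _ = 2 * eta ^ q⁻¹ * I ^ p⁻¹ := by rw [h1, h2]; ring

set_option maxHeartbeats 1000000 in
/-- Heat kernel with Gaussian upper bound against a bounded function `h` satisfying the
average decay condition `(GD)`: for `p ∈ (2,∞)`, `p' = p/(p-1)` and `st > 1`,
`∫ p_{st}(x,y) h(y) f(y) dμ(y) ≤ C (st)^{-ε/(2p')}
  (∫ V(x,√(st))⁻¹ e^{-d(x,y)²/(2cst)} f(y)^p dμ(y))^{1/p}`. -/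
theorem kernel_decay_estimate {X : Type*} [MetricSpace X] [MeasurableSpace X]
    (μ : Measure X) (C_D : ℝ) (hCD : 1 ≤ C_D)
    (hdoub : ∀ (x : X) (r : ℝ), 0 < r →
      μ (ball x (2 * r)) ≤ ENNReal.ofReal C_D * μ (ball x r))
    (pk : ℝ → X → X → ℝ≥0∞) (CG c : ℝ) (hCG : 0 < CG) (hc : 0 < c)
    (hGauss : ∀ (t : ℝ) (x y : X), 0 < t →
      pk t x y ≤ (μ (ball x (Real.sqrt t)))⁻¹ *
        ENNReal.ofReal (CG * Real.exp (-(dist x y) ^ 2 / (c * t))))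
    (h : X → ℝ≥0∞) (hmeas : Measurable h) (K : ℝ) (hbdd : ∀ x, h x ≤ ENNReal.ofReal K)
    (ε Ch : ℝ) (hε₀ : 0 < ε) (hε₁ : ε < 1) (hCh : 0 < Ch)
    (hGD : ∀ (x : X) (r : ℝ), 1 < r →
      (μ (ball x r))⁻¹ * ∫⁻ y in ball x r, h y ∂μ ≤ ENNReal.ofReal (Ch * r ^ (-ε)))
    (p : ℝ) (hp : 2 < p) :
    ∃ C : ℝ, 0 < C ∧ ∀ (s t : ℝ) (x : X) (f : X → ℝ≥0∞), Measurable f →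
      0 < s → 0 < t → 1 < s * t →
      ∫⁻ y, pk (s * t) x y * h y * f y ∂μ ≤
        ENNReal.ofReal (C * (s * t) ^ (-(ε / (2 * (p / (p - 1)))))) *
          (∫⁻ y, (μ (ball x (Real.sqrt (s * t))))⁻¹ *
            ENNReal.ofReal (Real.exp (-(dist x y) ^ 2 / (2 * c * (s * t)))) *
              f y ^ p ∂μ) ^ (1 / p) := by
  classical
  have hp1 : 1 < p := by linarith
  set q : ℝ := p / (p - 1) with hq_def
  have hpq : p.HolderConjugate q := (Real.holderConjugate_iff_eq_conjExponent hp1).2 rfl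
  have hqpos : 0 < q := hpq.symm.pos
  have hppos : 0 < p := hpq.pos
  have ha : 0 < q * (2 * p - 1) / (2 * p * c) :=
    div_pos (mul_pos hqpos (by linarith)) (mul_pos (mul_pos two_pos hppos) hc)
  set a : ℝ := q * (2 * p - 1) / (2 * p * c) with ha_def
  set κ : ℕ → ℝ := fun j => Real.exp a * Real.exp (-(a / 4) * 4 ^ j) with hκ_def
  have hκpos : ∀ j, 0 < κ j := fun j => mul_pos (Real.exp_pos _) (Real.exp_pos _)
  obtain ⟨m, hm⟩ := pow_unbounded_of_one_lt C_D (show (1:ℝ) < 4 by norm_num)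
  have hCD0 : (0:ℝ) ≤ C_D := by linarith
  have h4m : (0:ℝ) < 4 ^ m := by positivity
  set q₀ : ℝ := C_D / 4 ^ m with hq₀_def
  have hq₀0 : 0 ≤ q₀ := div_nonneg hCD0 h4m.le
  have hq₀1 : q₀ < 1 := (div_lt_one h4m).2 hm
  set kInf : ℝ := Real.exp a * (m.factorial * (4 / a) ^ m) with hkInf_def
  have hkInf0 : 0 ≤ kInf := by positivity
  clear_value q a κ q₀ kInf
  have hterm : ∀ j : ℕ, κ j * C_D ^ j ≤ kInf * q₀ ^ j := by
    intro j
    have hx : (0:ℝ) < a / 4 * 4 ^ j := by positivity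
    have h1 : (a / 4 * 4 ^ j) ^ m / (m.factorial : ℝ) ≤ Real.exp (a / 4 * 4 ^ j) :=
      pow_div_fact_le_exp hx.le m
    have h2 : Real.exp (-(a / 4) * 4 ^ j) ≤ (m.factorial : ℝ) / (a / 4 * 4 ^ j) ^ m := by
      rw [show -(a / 4) * (4:ℝ) ^ j = -(a / 4 * 4 ^ j) by ring, Real.exp_neg, ← inv_div
        ((a / 4 * 4 ^ j) ^ m) ((m.factorial : ℝ))]
      exact inv_anti₀ (by positivity) h1
    have hxm : (a / 4 * 4 ^ j : ℝ) ^ m = (a / 4) ^ m * ((4:ℝ) ^ m) ^ j := by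
      rw [mul_pow, ← pow_mul, ← pow_mul, mul_comm j m]
    have h3 : (m.factorial : ℝ) / (a / 4 * 4 ^ j) ^ m * C_D ^ j = (m.factorial * (4 / a) ^ m) * q₀ ^ j := by
      rw [hq₀_def, hxm, div_pow]
      field_simp [ha.ne']
      rw [div_pow, div_pow, ← pow_mul]
      field_simp
    calc κ j * C_D ^ j = Real.exp a * (Real.exp (-(a / 4) * 4 ^ j) * C_D ^ j) := by
          rw [hκ_def]; ring
      _ ≤ Real.exp a * ((m.factorial : ℝ) / (a / 4 * 4 ^ j) ^ m * C_D ^ j) := by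
          have hcd : (0:ℝ) ≤ C_D ^ j := pow_nonneg hCD0 j
          exact mul_le_mul_of_nonneg_left (mul_le_mul_of_nonneg_right h2 hcd) (Real.exp_pos _).le
      _ = kInf * q₀ ^ j := by rw [h3, hkInf_def]; ring
  set Ssum : ℝ≥0∞ := ∑' j : ℕ, ENNReal.ofReal (κ j) * ENNReal.ofReal C_D ^ j with hSsum_def
  have hSsumle : Ssum ≤ ENNReal.ofReal kInf * (1 - ENNReal.ofReal q₀)⁻¹ := by
    calc Ssum ≤ ∑' j : ℕ, ENNReal.ofReal kInf * ENNReal.ofReal q₀ ^ j := by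
          refine ENNReal.tsum_le_tsum fun j => ?_
          rw [← ENNReal.ofReal_pow hCD0, ← ENNReal.ofReal_mul (hκpos j).le,
            ← ENNReal.ofReal_pow hq₀0, ← ENNReal.ofReal_mul hkInf0]
          exact ENNReal.ofReal_le_ofReal (hterm j)
      _ = ENNReal.ofReal kInf * (1 - ENNReal.ofReal q₀)⁻¹ := by
          rw [ENNReal.tsum_mul_left, ENNReal.tsum_geometric]
  have hSsumtop : Ssum ≠ ∞ := by
    refine (lt_of_le_of_lt hSsumle ?_).ne
    have hlt1 : ENNReal.ofReal q₀ < 1 := by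
      rw [← ENNReal.ofReal_one]; exact ENNReal.ofReal_lt_ofReal_iff_of_nonneg hq₀0 |>.2 hq₀1
    have : (0:ℝ≥0∞) < 1 - ENNReal.ofReal q₀ := tsub_pos_of_lt hlt1
    exact ENNReal.mul_lt_top ENNReal.ofReal_lt_top (ENNReal.inv_lt_top.2 this)
  have hq11 : (0:ℝ) ≤ q - 1 := by linarith [hpq.symm.lt]
  set k₀ : ℝ≥0∞ := ENNReal.ofReal (CG ^ q) * ENNReal.ofReal K ^ (q - 1) with hk₀_def
  have hk₀top : k₀ ≠ ∞ :=
    ENNReal.mul_ne_top ENNReal.ofReal_ne_top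
      (ENNReal.rpow_ne_top_of_nonneg hq11 ENNReal.ofReal_ne_top)
  set k₅ : ℝ≥0∞ := (ENNReal.ofReal q)⁻¹ * k₀ * Ssum * ENNReal.ofReal Ch with hk₅_def
  have hk₅top : k₅ ≠ ∞ := by
    refine ENNReal.mul_ne_top (ENNReal.mul_ne_top (ENNReal.mul_ne_top ?_ hk₀top) hSsumtop)
      ENNReal.ofReal_ne_top
    exact ENNReal.inv_ne_top.2 (ENNReal.ofReal_pos.2 hqpos).ne'
  set k₃ : ℝ≥0∞ := k₅ ⊔ 1 with hk₃_def
  have hk₃0 : k₃ ≠ 0 := by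
    intro hcon; rw [hk₃_def] at hcon; simp at hcon
  have hk₃top : k₃ ≠ ∞ := by
    rw [hk₃_def]; simp [hk₅top]
  set k₆ : ℝ≥0∞ := 2 * k₃ ^ q⁻¹ with hk₆_def
  have hk₆top : k₆ ≠ ∞ :=
    ENNReal.mul_ne_top (by simp) (ENNReal.rpow_ne_top_of_nonneg (by positivity) hk₃top)
  refine ⟨k₆.toReal + 1, by positivity, fun s t x f hf hs ht hst => ?_⟩
  have hk₆C : k₆ ≤ ENNReal.ofReal (k₆.toReal + 1) := by
    conv_lhs => rw [← ENNReal.ofReal_toReal hk₆top]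
    exact ENNReal.ofReal_le_ofReal (by linarith)
  have hT : 0 < s * t := mul_pos hs ht
  have hT1 : 1 < s * t := hst
  have hr0 : 0 < Real.sqrt (s * t) := Real.sqrt_pos.2 hT
  have hr1 : 1 < Real.sqrt (s * t) := by
    rw [show (1:ℝ) = Real.sqrt 1 by simp]
    exact Real.sqrt_lt_sqrt (by norm_num) hst
  set r : ℝ := Real.sqrt (s * t) with hr_def
  have hrT : r ^ 2 = s * t := Real.sq_sqrt hT.le
  set V : ℝ≥0∞ := μ (ball x r) with hV_def
  set I : ℝ≥0∞ := ∫⁻ y, V⁻¹ *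
      ENNReal.ofReal (Real.exp (-dist x y ^ 2 / (2 * c * (s * t)))) * f y ^ p ∂μ with hI_def
  clear_value r V I
  have hRC : 0 < (k₆.toReal + 1) * (s * t) ^ (-(ε / (2 * q))) :=
    mul_pos (by positivity) (Real.rpow_pos_of_pos hT _)
  by_cases hVtop : V = ∞
  · have hpk : ∀ y, pk (s * t) x y * h y * f y = 0 := by
      intro y
      have hG := hGauss (s * t) x y hT
      rw [← hr_def, ← hV_def, hVtop] at hG
      have h0 : pk (s * t) x y = 0 := by simpa using hG
      rw [h0, zero_mul, zero_mul]
    rw [lintegral_congr hpk, lintegral_zero]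
    exact zero_le
  by_cases hV0 : V = 0
  · by_cases hN : μ {y | f y ≠ 0} = 0
    · have hae : ∀ᵐ y ∂μ, f y = 0 := by
        rw [ae_iff]
        simpa using hN
      have hz : ∫⁻ y, pk (s * t) x y * h y * f y ∂μ = 0 := by
        have hcong : (fun y => pk (s * t) x y * h y * f y) =ᵐ[μ] fun _ => 0 :=
          hae.mono fun y hy => by simp [hy]
        rw [lintegral_congr_ae hcong, lintegral_zero]
      rw [hz]
      exact zero_le
    · have hmeasN : MeasurableSet {y | f y ≠ 0} := by
        have : {y | f y ≠ 0} = f ⁻¹' ({0}ᶜ) := rfl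
        rw [this]
        exact hf (measurableSet_singleton 0).compl
      have hIinf : I = ∞ := by
        refine top_unique ?_
        calc (∞:ℝ≥0∞) = ∞ * μ {y | f y ≠ 0} := (ENNReal.top_mul hN).symm
          _ = ∫⁻ y in {y | f y ≠ 0}, ∞ ∂μ := by rw [setLIntegral_const]
          _ = ∫⁻ y, {y | f y ≠ 0}.indicator (fun _ => ∞) y ∂μ :=
              (lintegral_indicator hmeasN _).symm
          _ ≤ I := by
              rw [hI_def]
              refine lintegral_mono fun y => ?_
              rcases eq_or_ne (f y) 0 with hy | hy
              · rw [Set.indicator_of_notMem (by simp [hy])]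
                exact zero_le
              · have hfyp : f y ^ p ≠ 0 := by
                  simp only [Ne, ENNReal.rpow_eq_zero_iff, not_or, not_and]
                  exact ⟨fun h' => absurd h' hy, fun _ => not_lt.2 hppos.le⟩
                rw [Set.indicator_of_mem (show y ∈ {y | f y ≠ 0} from hy), hV0,
                  ENNReal.inv_zero,
                  ENNReal.top_mul (ENNReal.ofReal_pos.2 (Real.exp_pos _)).ne',
                  ENNReal.top_mul hfyp]
      rw [hIinf, ENNReal.top_rpow_of_pos (by positivity),
        ENNReal.mul_top (ENNReal.ofReal_pos.2 hRC).ne']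
      exact le_top
  · have hV0' : V ≠ 0 := hV0
    have hVtop' : V ≠ ∞ := hVtop
    have hW0 : V⁻¹ ≠ 0 := ENNReal.inv_ne_zero.2 hVtop'
    have hWtop : V⁻¹ ≠ ∞ := ENNReal.inv_ne_top.2 hV0'
    set Bs : ℕ → Set X := fun j => ball x (2 ^ j * r) with hBs_def
    set As : ℕ → Set X := fun j => toMeasurable μ (Bs j) with hAs_def
    set S : ℕ → Set X := fun j => Nat.casesOn j (As 0) fun k => As (k + 1) \ As k with hS_def
    have hSmeas : ∀ j, MeasurableSet (S j) := by
      intro j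
      cases j with
      | zero => exact measurableSet_toMeasurable μ _
      | succ k => exact (measurableSet_toMeasurable μ _).diff (measurableSet_toMeasurable μ _)
    have hSsub : ∀ j, S j ⊆ As j := by
      intro j
      cases j with
      | zero => exact subset_rfl
      | succ k => exact Set.diff_subset
    have hμBs : ∀ j, μ (Bs j) ≤ ENNReal.ofReal C_D ^ j * V := by
      intro j
      induction j with
      | zero => simp [hBs_def, hV_def]
      | succ k ih =>
          have h2 : (2:ℝ) ^ (k + 1) * r = 2 * (2 ^ k * r) := by ring
          calc μ (Bs (k + 1)) = μ (ball x (2 * (2 ^ k * r))) := by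
                simp only [hBs_def]; rw [h2]
            _ ≤ ENNReal.ofReal C_D * μ (ball x (2 ^ k * r)) := hdoub x _ (by positivity)
            _ ≤ ENNReal.ofReal C_D * (ENNReal.ofReal C_D ^ k * V) := by
                refine mul_le_mul_right ?_ _
                simpa [hBs_def] using ih
            _ = ENNReal.ofReal C_D ^ (k + 1) * V := by rw [pow_succ]; ring
    have hBsfin : ∀ j, μ (Bs j) ≠ ∞ := fun j =>
      ((hμBs j).trans_lt (ENNReal.mul_lt_top (ENNReal.pow_ne_top ENNReal.ofReal_ne_top).lt_top
        hVtop'.lt_top)).ne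
    have h2j : ∀ j : ℕ, (1:ℝ) ≤ 2 ^ j := fun j => one_le_pow₀ (by norm_num)
    have hrBs : ∀ j : ℕ, r ≤ 2 ^ j * r := fun j => le_mul_of_one_le_left hr0.le (h2j j)
    have hBs0 : ∀ j, μ (Bs j) ≠ 0 := by
      intro j hcon
      have hVle : V ≤ μ (Bs j) := by
        rw [hV_def]
        simp only [hBs_def]
        exact measure_mono (ball_subset_ball (hrBs j))
      exact hV0' (le_antisymm (hcon ▸ hVle) (zero_le))
    have hGDj : ∀ j, ∫⁻ y in Bs j, h y ∂μ ≤
        ENNReal.ofReal C_D ^ j * (ENNReal.ofReal Ch * ENNReal.ofReal (r ^ (-ε)) * V) := by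
      intro j
      have hradius : 1 < 2 ^ j * r := lt_of_lt_of_le hr1 (hrBs j)
      have h1 := hGD x (2 ^ j * r) hradius
      have h3 := mul_le_mul_left h1 (μ (ball x (2 ^ j * r)))
      rw [mul_right_comm, ENNReal.inv_mul_cancel (by simpa [hBs_def] using hBs0 j)
        (by simpa [hBs_def] using hBsfin j), one_mul] at h3
      have h4 : ENNReal.ofReal (Ch * (2 ^ j * r) ^ (-ε)) ≤
          ENNReal.ofReal Ch * ENNReal.ofReal (r ^ (-ε)) := by
        rw [← ENNReal.ofReal_mul hCh.le]
        refine ENNReal.ofReal_le_ofReal ?_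
        rw [Real.mul_rpow (by positivity) hr0.le]
        have hle1 : ((2:ℝ) ^ j) ^ (-ε) ≤ 1 :=
          Real.rpow_le_one_of_one_le_of_nonpos (h2j j) (by linarith)
        have h5 : ((2:ℝ) ^ j) ^ (-ε) * r ^ (-ε) ≤ r ^ (-ε) :=
          mul_le_of_le_one_left (Real.rpow_nonneg hr0.le (-ε)) hle1
        exact mul_le_mul_of_nonneg_left h5 hCh.le
      calc ∫⁻ y in Bs j, h y ∂μ = ∫⁻ y in ball x (2 ^ j * r), h y ∂μ := by rw [hBs_def]
        _ ≤ ENNReal.ofReal (Ch * (2 ^ j * r) ^ (-ε)) * μ (ball x (2 ^ j * r)) := h3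
        _ ≤ (ENNReal.ofReal Ch * ENNReal.ofReal (r ^ (-ε))) * (ENNReal.ofReal C_D ^ j * V) := by
            refine mul_le_mul' h4 ?_
            simpa [hBs_def] using hμBs j
        _ = ENNReal.ofReal C_D ^ j * (ENNReal.ofReal Ch * ENNReal.ofReal (r ^ (-ε)) * V) := by
            ring
    have hSint : ∀ j, ∫⁻ y in S j, h y ∂μ ≤ ∫⁻ y in Bs j, h y ∂μ := by
      intro j
      calc ∫⁻ y in S j, h y ∂μ ≤ ∫⁻ y in As j, h y ∂μ :=
            lintegral_mono' (Measure.restrict_mono (hSsub j) le_rfl) le_rfl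
        _ = ∫⁻ y in Bs j, h y ∂μ := by
            simp only [hAs_def]
            rw [Measure.restrict_toMeasurable (hBsfin j)]
    set Ψ : X → ℝ≥0∞ := fun y => ∑' j : ℕ, ENNReal.ofReal (κ j) * (S j).indicator h y
      with hΨ_def
    have hΨmeas : Measurable Ψ := by
      simp only [hΨ_def]
      exact Measurable.ennreal_tsum fun j => (hmeas.indicator (hSmeas j)).const_mul _
    have hcover : ∀ y, ENNReal.ofReal (Real.exp (-(a * dist x y ^ 2 / (s * t)))) * h y ≤ Ψ y := by
      intro y
      have hex : ∃ j, y ∈ As j := by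
        obtain ⟨n, hn⟩ := pow_unbounded_of_one_lt (dist x y / r) (show (1:ℝ) < 2 by norm_num)
        refine ⟨n, ?_⟩
        simp only [hAs_def]
        refine subset_toMeasurable μ _ ?_
        simp only [hBs_def]
        exact mem_ball.2 (by rw [dist_comm]; exact (div_lt_iff₀ hr0).1 hn)
      obtain ⟨j₀, hj₀spec, hj₀min⟩ : ∃ j, y ∈ As j ∧ ∀ k, k < j → y ∉ As k :=
        ⟨Nat.find hex, Nat.find_spec hex, fun k hk => Nat.find_min hex hk⟩
      have hyS : y ∈ S j₀ := by
        cases j₀ with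
        | zero => simpa [hS_def] using hj₀spec
        | succ k =>
            simp only [hS_def]
            exact ⟨hj₀spec, hj₀min k (Nat.lt_succ_self k)⟩
      have hexp : Real.exp (-(a * dist x y ^ 2 / (s * t))) ≤ κ j₀ := by
        cases j₀ with
        | zero =>
            have h1 : Real.exp (-(a * dist x y ^ 2 / (s * t))) ≤ 1 := by
              rw [Real.exp_le_one_iff]
              have : 0 ≤ a * dist x y ^ 2 / (s * t) := by positivity
              linarith
            have h2 : (1:ℝ) ≤ κ 0 := by
              simp only [hκ_def]
              rw [pow_zero, mul_one, ← Real.exp_add]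
              exact Real.one_le_exp (by linarith)
            linarith
        | succ k =>
            have hyk : y ∉ As k := hj₀min k (Nat.lt_succ_self k)
            have hyBk : y ∉ Bs k := fun hmem => hyk (by
              simp only [hAs_def]; exact subset_toMeasurable μ _ hmem)
            have hd : 2 ^ k * r ≤ dist x y := by
              by_contra hlt
              push_neg at hlt
              exact hyBk (by
                simp only [hBs_def]
                exact mem_ball.2 (by rw [dist_comm]; exact hlt))
            have hd2 : (4:ℝ) ^ k * (s * t) ≤ dist x y ^ 2 := by
              have hsq : ((2:ℝ) ^ k * r) ^ 2 ≤ dist x y ^ 2 :=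
                pow_le_pow_left₀ (by positivity) hd 2
              calc (4:ℝ) ^ k * (s * t) = ((2:ℝ) ^ k * r) ^ 2 := by
                    rw [mul_pow, ← hrT, show ((2:ℝ) ^ k) ^ 2 = 4 ^ k by
                      rw [← pow_mul, mul_comm k 2, pow_mul]; norm_num]
                _ ≤ dist x y ^ 2 := hsq
            have hstep : a * 4 ^ k ≤ a * dist x y ^ 2 / (s * t) := by
              rw [le_div_iff₀ hT]
              calc a * 4 ^ k * (s * t) = a * (4 ^ k * (s * t)) := by ring
                _ ≤ a * dist x y ^ 2 := mul_le_mul_of_nonneg_left hd2 ha.le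
            calc Real.exp (-(a * dist x y ^ 2 / (s * t))) ≤ Real.exp (-(a * 4 ^ k)) :=
                  Real.exp_le_exp.2 (by linarith)
              _ ≤ κ (k + 1) := by
                  simp only [hκ_def]
                  rw [show -(a / 4) * (4:ℝ) ^ (k + 1) = -(a * 4 ^ k) by rw [pow_succ]; ring]
                  exact le_mul_of_one_le_left (Real.exp_pos _).le (Real.one_le_exp ha.le)
      calc ENNReal.ofReal (Real.exp (-(a * dist x y ^ 2 / (s * t)))) * h y
          ≤ ENNReal.ofReal (κ j₀) * h y := mul_le_mul_left (ENNReal.ofReal_le_ofReal hexp) _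
        _ = ENNReal.ofReal (κ j₀) * (S j₀).indicator h y := by rw [Set.indicator_of_mem hyS]
        _ ≤ Ψ y := by simp only [hΨ_def]; exact ENNReal.le_tsum j₀
    have hΨint : ∫⁻ y, Ψ y ∂μ ≤ Ssum * (ENNReal.ofReal Ch * ENNReal.ofReal (r ^ (-ε)) * V) := by
      have h1 : ∫⁻ y, Ψ y ∂μ = ∑' j : ℕ, ENNReal.ofReal (κ j) * ∫⁻ y in S j, h y ∂μ := by
        simp only [hΨ_def]
        rw [lintegral_tsum fun j => ((hmeas.indicator (hSmeas j)).const_mul _).aemeasurable]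
        congr 1
        funext j
        rw [lintegral_const_mul _ (hmeas.indicator (hSmeas j)), lintegral_indicator (hSmeas j)]
      rw [h1]
      calc ∑' j : ℕ, ENNReal.ofReal (κ j) * ∫⁻ y in S j, h y ∂μ
          ≤ ∑' j : ℕ, (ENNReal.ofReal (κ j) * ENNReal.ofReal C_D ^ j) *
              (ENNReal.ofReal Ch * ENNReal.ofReal (r ^ (-ε)) * V) := by
            refine ENNReal.tsum_le_tsum fun j => ?_
            calc ENNReal.ofReal (κ j) * ∫⁻ y in S j, h y ∂μ
                ≤ ENNReal.ofReal (κ j) * (ENNReal.ofReal C_D ^ j *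
                    (ENNReal.ofReal Ch * ENNReal.ofReal (r ^ (-ε)) * V)) :=
                  mul_le_mul_right ((hSint j).trans (hGDj j)) _
              _ = _ := by ring
        _ = Ssum * (ENNReal.ofReal Ch * ENNReal.ofReal (r ^ (-ε)) * V) := by
            rw [hSsum_def, ENNReal.tsum_mul_right]
    have hrε : ENNReal.ofReal (r ^ (-ε)) = ENNReal.ofReal ((s * t) ^ (-(ε / 2))) := by
      congr 1
      rw [hr_def, Real.sqrt_eq_rpow, ← Real.rpow_mul hT.le,
        show 1 / 2 * (-ε) = -(ε / 2) by ring]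
    have key : ∀ lam : ℝ≥0∞, lam ≠ 0 → lam ≠ ∞ →
        (∫⁻ y, pk (s * t) x y * h y * f y ∂μ) ≤
          lam ^ q * (k₃ * ENNReal.ofReal ((s * t) ^ (-(ε / 2)))) + lam ^ (-p) * I := by
      intro lam hlam0 hlamt
      set A : X → ℝ≥0∞ := fun y =>
        ENNReal.ofReal CG * V⁻¹ ^ q⁻¹ *
          ENNReal.ofReal (Real.exp (-((2 * p - 1) * dist x y ^ 2) / (2 * p * c * (s * t)))) *
            h y with hA_def
      set B : X → ℝ≥0∞ := fun y =>
        V⁻¹ ^ p⁻¹ * ENNReal.ofReal (Real.exp (-dist x y ^ 2 / (p * (2 * c * (s * t))))) * f y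
        with hB_def
      have hpt1 : ∀ y, pk (s * t) x y * h y * f y ≤ A y * B y := by
        intro y
        have hG := hGauss (s * t) x y hT
        rw [← hr_def, ← hV_def] at hG
        have hWW : V⁻¹ ^ q⁻¹ * V⁻¹ ^ p⁻¹ = V⁻¹ := by
          rw [← ENNReal.rpow_add _ _ hW0 hWtop, add_comm, hpq.inv_add_inv_eq_one,
            ENNReal.rpow_one]
        have hEE : Real.exp (-((2 * p - 1) * dist x y ^ 2) / (2 * p * c * (s * t))) *
            Real.exp (-dist x y ^ 2 / (p * (2 * c * (s * t)))) =
            Real.exp (-dist x y ^ 2 / (c * (s * t))) := by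
          rw [← Real.exp_add]
          congr 1
          field_simp
          ring
        have step : A y * B y = (V⁻¹ ^ q⁻¹ * V⁻¹ ^ p⁻¹) *
            (ENNReal.ofReal CG *
              (ENNReal.ofReal (Real.exp (-((2 * p - 1) * dist x y ^ 2) / (2 * p * c * (s * t)))) *
                ENNReal.ofReal (Real.exp (-dist x y ^ 2 / (p * (2 * c * (s * t))))))) *
            (h y * f y) := by
          simp only [hA_def, hB_def]; ring
        rw [mul_assoc]
        calc pk (s * t) x y * (h y * f y)
            ≤ (V⁻¹ * ENNReal.ofReal (CG * Real.exp (-dist x y ^ 2 / (c * (s * t))))) *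
              (h y * f y) := mul_le_mul_left hG _
          _ = A y * B y := by
              rw [step, hWW, ← ENNReal.ofReal_mul (Real.exp_pos _).le, hEE,
                ENNReal.ofReal_mul hCG.le]
      have hAq : ∀ y, A y ^ q ≤ k₀ * (V⁻¹ * Ψ y) := by
        intro y
        have h1 : A y ^ q = ENNReal.ofReal (CG ^ q) *
            (V⁻¹ * (ENNReal.ofReal (Real.exp (-(a * dist x y ^ 2 / (s * t)))) * h y ^ q)) := by
          simp only [hA_def]
          rw [ENNReal.mul_rpow_of_nonneg _ _ hqpos.le, ENNReal.mul_rpow_of_nonneg _ _ hqpos.le,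
            ENNReal.mul_rpow_of_nonneg _ _ hqpos.le, ← ENNReal.rpow_mul,
            inv_mul_cancel₀ hqpos.ne', ENNReal.rpow_one, ENNReal.ofReal_rpow_of_pos hCG,
            ENNReal.ofReal_rpow_of_pos (Real.exp_pos _), ← Real.exp_mul,
            show -((2 * p - 1) * dist x y ^ 2) / (2 * p * c * (s * t)) * q =
              -(a * dist x y ^ 2 / (s * t)) from by rw [ha_def]; field_simp]
          ring
        have h2 : h y ^ q ≤ ENNReal.ofReal K ^ (q - 1) * h y := by
          rcases eq_or_ne (h y) 0 with h0 | h0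
          · rw [h0, ENNReal.zero_rpow_of_pos hqpos, mul_zero]
          · have hht : h y ≠ ∞ := (lt_of_le_of_lt (hbdd y) ENNReal.ofReal_lt_top).ne
            calc h y ^ q = h y ^ (q - 1) * h y := by
                  conv_lhs => rw [show q = q - 1 + 1 by ring]
                  rw [ENNReal.rpow_add _ _ h0 hht, ENNReal.rpow_one]
              _ ≤ ENNReal.ofReal K ^ (q - 1) * h y :=
                  mul_le_mul_left (ENNReal.rpow_le_rpow (hbdd y) hq11) _
        calc A y ^ q ≤ ENNReal.ofReal (CG ^ q) *
              (V⁻¹ * (ENNReal.ofReal (Real.exp (-(a * dist x y ^ 2 / (s * t)))) *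
                (ENNReal.ofReal K ^ (q - 1) * h y))) := by
              rw [h1]; gcongr
          _ = (ENNReal.ofReal (CG ^ q) * ENNReal.ofReal K ^ (q - 1)) *
              (V⁻¹ * (ENNReal.ofReal (Real.exp (-(a * dist x y ^ 2 / (s * t)))) * h y)) := by
              ring
          _ ≤ k₀ * (V⁻¹ * Ψ y) := by
              rw [hk₀_def]
              gcongr
              exact hcover y
      have hBp : ∀ y, B y ^ p = V⁻¹ *
          ENNReal.ofReal (Real.exp (-dist x y ^ 2 / (2 * c * (s * t)))) * f y ^ p := by
        intro y
        simp only [hB_def]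
        rw [ENNReal.mul_rpow_of_nonneg _ _ hppos.le, ENNReal.mul_rpow_of_nonneg _ _ hppos.le,
          ← ENNReal.rpow_mul, inv_mul_cancel₀ hppos.ne', ENNReal.rpow_one,
          ENNReal.ofReal_rpow_of_pos (Real.exp_pos _), ← Real.exp_mul,
          show -dist x y ^ 2 / (p * (2 * c * (s * t))) * p = -dist x y ^ 2 / (2 * c * (s * t))
            from by field_simp]
      have hpt2 : ∀ y, A y * B y ≤
          (lam ^ q * (ENNReal.ofReal q)⁻¹ * (k₀ * V⁻¹)) * Ψ y +
            (lam ^ (-p) * (ENNReal.ofReal p)⁻¹) * B y ^ p := by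
        intro y
        have hABeq : A y * B y = (lam * A y) * (lam⁻¹ * B y) := by
          rw [show (lam * A y) * (lam⁻¹ * B y) = lam * lam⁻¹ * (A y * B y) by ring,
            ENNReal.mul_inv_cancel hlam0 hlamt, one_mul]
        rw [hABeq]
        refine le_trans (ENNReal.young_inequality _ _ hpq.symm) ?_
        have e1 : (lam * A y) ^ q / ENNReal.ofReal q =
            lam ^ q * (ENNReal.ofReal q)⁻¹ * A y ^ q := by
          rw [ENNReal.mul_rpow_of_nonneg _ _ hqpos.le, div_eq_mul_inv]; ring
        have e2 : (lam⁻¹ * B y) ^ p / ENNReal.ofReal p =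
            lam ^ (-p) * (ENNReal.ofReal p)⁻¹ * B y ^ p := by
          rw [ENNReal.mul_rpow_of_nonneg _ _ hppos.le, ENNReal.inv_rpow, ← ENNReal.rpow_neg,
            div_eq_mul_inv]
          ring
        rw [e1, e2]
        refine add_le_add ?_ le_rfl
        calc lam ^ q * (ENNReal.ofReal q)⁻¹ * A y ^ q
            ≤ lam ^ q * (ENNReal.ofReal q)⁻¹ * (k₀ * (V⁻¹ * Ψ y)) := by
              gcongr
              exact hAq y
          _ = (lam ^ q * (ENNReal.ofReal q)⁻¹ * (k₀ * V⁻¹)) * Ψ y := by ring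
      have hc₁top : lam ^ q * (ENNReal.ofReal q)⁻¹ * (k₀ * V⁻¹) ≠ ∞ := by
        refine ENNReal.mul_ne_top (ENNReal.mul_ne_top ?_ ?_) (ENNReal.mul_ne_top hk₀top hWtop)
        · exact ENNReal.rpow_ne_top_of_nonneg hqpos.le hlamt
        · exact ENNReal.inv_ne_top.2 (ENNReal.ofReal_pos.2 hqpos).ne'
      have hc₂top : lam ^ (-p) * (ENNReal.ofReal p)⁻¹ ≠ ∞ := by
        refine ENNReal.mul_ne_top ?_ (ENNReal.inv_ne_top.2 (ENNReal.ofReal_pos.2 hppos).ne')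
        rw [ENNReal.rpow_neg]
        exact ENNReal.inv_ne_top.2 (ENNReal.rpow_pos hlam0.bot_lt hlamt).ne'
      have hIB : ∫⁻ y, B y ^ p ∂μ = I := by
        rw [hI_def]
        exact lintegral_congr hBp
      calc ∫⁻ y, pk (s * t) x y * h y * f y ∂μ
          ≤ ∫⁻ y, ((lam ^ q * (ENNReal.ofReal q)⁻¹ * (k₀ * V⁻¹)) * Ψ y +
              (lam ^ (-p) * (ENNReal.ofReal p)⁻¹) * B y ^ p) ∂μ :=
            lintegral_mono fun y => (hpt1 y).trans (hpt2 y)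
        _ = (lam ^ q * (ENNReal.ofReal q)⁻¹ * (k₀ * V⁻¹)) * ∫⁻ y, Ψ y ∂μ +
            (lam ^ (-p) * (ENNReal.ofReal p)⁻¹) * ∫⁻ y, B y ^ p ∂μ := by
            rw [lintegral_add_left (hΨmeas.const_mul _), lintegral_const_mul' _ _ hc₁top,
              lintegral_const_mul' _ _ hc₂top]
        _ ≤ (lam ^ q * (ENNReal.ofReal q)⁻¹ * (k₀ * V⁻¹)) *
              (Ssum * (ENNReal.ofReal Ch * ENNReal.ofReal (r ^ (-ε)) * V)) +
            (lam ^ (-p) * (ENNReal.ofReal p)⁻¹) * I := by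
            rw [hIB]
            gcongr
        _ = lam ^ q * (k₅ * ENNReal.ofReal (r ^ (-ε))) * (V⁻¹ * V) +
            (lam ^ (-p) * (ENNReal.ofReal p)⁻¹) * I := by
            rw [hk₅_def]; ring
        _ ≤ lam ^ q * (k₃ * ENNReal.ofReal ((s * t) ^ (-(ε / 2)))) + lam ^ (-p) * I := by
            rw [ENNReal.inv_mul_cancel hV0' hVtop', mul_one, ← hrε]
            refine add_le_add ?_ ?_
            · refine mul_le_mul_right (mul_le_mul_left ?_ _) _
              rw [hk₃_def]
              exact le_sup_left
            · refine mul_le_mul_left ?_ _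
              calc lam ^ (-p) * (ENNReal.ofReal p)⁻¹ ≤ lam ^ (-p) * 1 := by
                    gcongr
                    exact ENNReal.inv_le_one.2 (ENNReal.one_le_ofReal.2 hp1.le)
                _ = lam ^ (-p) := mul_one _
    have heta0 : k₃ * ENNReal.ofReal ((s * t) ^ (-(ε / 2))) ≠ 0 :=
      mul_ne_zero hk₃0 (ENNReal.ofReal_pos.2 (Real.rpow_pos_of_pos hT _)).ne'
    have hetat : k₃ * ENNReal.ofReal ((s * t) ^ (-(ε / 2))) ≠ ∞ :=
      ENNReal.mul_ne_top hk₃top ENNReal.ofReal_ne_top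
    have hfinal := opt_lemma hpq (k₃ * ENNReal.ofReal ((s * t) ^ (-(ε / 2)))) I _ heta0 hetat key
    refine le_trans hfinal ?_
    have hsplit : (k₃ * ENNReal.ofReal ((s * t) ^ (-(ε / 2)))) ^ q⁻¹ =
        k₃ ^ q⁻¹ * ENNReal.ofReal ((s * t) ^ (-(ε / (2 * q)))) := by
      rw [ENNReal.mul_rpow_of_nonneg _ _ (by positivity),
        ENNReal.ofReal_rpow_of_pos (Real.rpow_pos_of_pos hT _),
        ← Real.rpow_mul hT.le, show -(ε / 2) * q⁻¹ = -(ε / (2 * q)) by ring]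
    rw [hsplit]
    calc 2 * (k₃ ^ q⁻¹ * ENNReal.ofReal ((s * t) ^ (-(ε / (2 * q))))) * I ^ p⁻¹
        = k₆ * ENNReal.ofReal ((s * t) ^ (-(ε / (2 * q)))) * I ^ p⁻¹ := by
          rw [hk₆_def]; ring
      _ ≤ ENNReal.ofReal (k₆.toReal + 1) * ENNReal.ofReal ((s * t) ^ (-(ε / (2 * q)))) *
            I ^ p⁻¹ := by gcongr
      _ = ENNReal.ofReal ((k₆.toReal + 1) * (s * t) ^ (-(ε / (2 * q)))) * I ^ (1 / p) := by
          rw [← ENNReal.ofReal_mul (by positivity), one_div]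
end

section
/- Suppose the weighted gradient heat kernel bound (GLY_q) holds for some q > p: ∫ |∇_x p_t(x,y)|^q exp(γ d(x,y)²/t) dμ(x) ≤ C t^{-q/2} V(y,√t)^{1-q}, and suppose the bounded function h ≥ 0 satisfies (1/V(y,r))∫_{B(y,r)} h dμ ≤ C r^{-ε} for r > 1. Then with δ = (q-p) (appropriately normalized) there are constants C, γ' > 0 such that for t > 1: ∫ h(x)^p |∇_x p_t(x,y)|^p exp(γ' d(x,y)²/t) dμ(x) ≤ C t^{-p/2 - εδ/(2q)} V(y,√t)^{1-p}. -/
set_option maxHeartbeats 2000000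

open MeasureTheory Metric Real ENNReal Filter Set Topology

private lemma aux_lintegral_const_mul_le {α : Type*} [MeasurableSpace α] (ν : Measure α)
    (c : ℝ≥0∞) (hc : c ≠ ⊤) (f : α → ℝ≥0∞) :
    ∫⁻ x, c * f x ∂ν ≤ c * ∫⁻ x, f x ∂ν := by
  rcases eq_or_ne c 0 with rfl | hc0
  · simp
  · have h1 : c⁻¹ * ∫⁻ x, c * f x ∂ν ≤ ∫⁻ x, f x ∂ν := by
      refine le_trans (lintegral_const_mul_le c⁻¹ fun x => c * f x) ?_
      refine le_of_eq (lintegral_congr fun x => ?_)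
      rw [← mul_assoc, ENNReal.inv_mul_cancel hc0 hc, one_mul]
    calc ∫⁻ x, c * f x ∂ν = c * (c⁻¹ * ∫⁻ x, c * f x ∂ν) := by
          rw [← mul_assoc, ENNReal.mul_inv_cancel hc0 hc, one_mul]
      _ ≤ c * ∫⁻ x, f x ∂ν := mul_le_mul_right h1 c

private lemma aux_summable {ρ c : ℝ} (hρ : 0 < ρ) (hc : 0 < c) :
    Summable (fun k : ℕ => ρ ^ k * Real.exp (-(c * 4 ^ k))) := by
  apply summable_of_ratio_norm_eventually_le (r := 1/2) (by norm_num)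
  have h4 : Tendsto (fun k : ℕ => (4:ℝ) ^ k) atTop atTop :=
    tendsto_pow_atTop_atTop_of_one_lt (by norm_num)
  have h3 : Tendsto (fun k : ℕ => 3 * c * (4:ℝ) ^ k) atTop atTop :=
    h4.const_mul_atTop (by positivity)
  have he : Tendsto (fun k : ℕ => ρ * Real.exp (-(3 * c * 4 ^ k))) atTop (𝓝 (ρ * 0)) :=
    (Real.tendsto_exp_neg_atTop_nhds_zero.comp h3).const_mul ρ
  rw [mul_zero] at he
  filter_upwards [he.eventually_lt_const (by norm_num : (0:ℝ) < 1/2)] with k hk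
  have h₁ : -(c * 4 ^ (k+1)) = -(3 * c * 4 ^ k) + -(c * 4 ^ k) := by ring
  calc ‖ρ ^ (k+1) * Real.exp (-(c * 4 ^ (k+1)))‖
      = (ρ * Real.exp (-(3 * c * 4 ^ k))) * (ρ ^ k * Real.exp (-(c * 4 ^ k))) := by
        rw [Real.norm_eq_abs, abs_of_pos (by positivity), h₁, Real.exp_add, pow_succ]; ring
    _ ≤ (1/2) * (ρ ^ k * Real.exp (-(c * 4 ^ k))) :=
        mul_le_mul_of_nonneg_right hk.le (by positivity)
    _ = (1/2) * ‖ρ ^ k * Real.exp (-(c * 4 ^ k))‖ := by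
        rw [Real.norm_eq_abs, abs_of_pos (by positivity)]

private noncomputable def eseq (γ : ℝ) : ℕ → ℝ
  | 0 => 1
  | (k+1) => Real.exp (-(γ/2) * 4 ^ k)

private lemma eseq_pos (γ : ℝ) (k : ℕ) : 0 < eseq γ k := by
  cases k with
  | zero => norm_num [eseq]
  | succ k => exact Real.exp_pos _

private lemma aux_powswap {x : ℝ} (hx : 0 < x) (e : ℝ) (m : ℕ) :
    (x ^ m) ^ e = (x ^ e) ^ m := by
  rw [← Real.rpow_natCast x m, ← Real.rpow_natCast (x ^ e) m, ← Real.rpow_mul hx.le,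
    ← Real.rpow_mul hx.le, mul_comm]

private lemma aux_doub {X : Type*} [MetricSpace X] [MeasurableSpace X] (μ : Measure X)
    (C_D : ℝ)
    (hdoub : ∀ (x : X) (r : ℝ), 0 < r → μ (ball x (2 * r)) ≤ ENNReal.ofReal C_D * μ (ball x r))
    (y : X) (r : ℝ) (hr : 0 < r) :
    ∀ k : ℕ, μ (ball y (2 ^ k * r)) ≤ ENNReal.ofReal C_D ^ k * μ (ball y r) := by
  intro k
  induction k with
  | zero => simp
  | succ k ih =>
      have h2 : (2:ℝ) ^ (k+1) * r = 2 * (2 ^ k * r) := by ring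
      rw [h2]
      calc μ (ball y (2 * (2 ^ k * r))) ≤ ENNReal.ofReal C_D * μ (ball y (2 ^ k * r)) :=
            hdoub y _ (by positivity)
        _ ≤ ENNReal.ofReal C_D * (ENNReal.ofReal C_D ^ k * μ (ball y r)) :=
            mul_le_mul_right ih _
        _ = ENNReal.ofReal C_D ^ (k+1) * μ (ball y r) := by rw [pow_succ]; ring

/-- If the weighted gradient heat kernel bound `(GLY_q)` holds for some `q > p`, and the
bounded function `h ≥ 0` satisfies the average decay `⨍_{B(y,r)} h dμ ≤ C r^{-ε}` for
`r > 1`, then with `δ = (q-p)/2` there are `C', γ' > 0` such that for `t > 1`: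
`∫ h(x)^p |∇_x p_t(x,y)|^p e^{γ' d(x,y)²/t} dμ(x) ≤ C' t^{-p/2 - εδ/(2q)} V(y,√t)^{1-p}`. -/
theorem weighted_gradient_kernel_decay {X : Type*} [MetricSpace X] [MeasurableSpace X]
    (μ : Measure X) (C_D : ℝ) (hCD : 1 ≤ C_D)
    (hdoub : ∀ (x : X) (r : ℝ), 0 < r →
      μ (ball x (2 * r)) ≤ ENNReal.ofReal C_D * μ (ball x r))
    (g : ℝ → X → X → ℝ≥0∞) -- `g t x y` represents `|∇_x p_t(x,y)|`
    (p q γ CGLY : ℝ) (hp : 2 < p) (hpq : p < q) (hγ : 0 < γ) (hCGLY : 0 < CGLY)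
    (hGLY : ∀ (t : ℝ) (y : X), 0 < t →
      ∫⁻ x, g t x y ^ q * ENNReal.ofReal (Real.exp (γ * (dist x y) ^ 2 / t)) ∂μ ≤
        ENNReal.ofReal (CGLY * t ^ (-(q / 2))) * μ (ball y (Real.sqrt t)) ^ ((1:ℝ) - q))
    (h : X → ℝ≥0∞) (hmeas : Measurable h) (K : ℝ) (hbdd : ∀ x, h x ≤ ENNReal.ofReal K)
    (ε Ch : ℝ) (hε : 0 < ε) (hCh : 0 < Ch)
    (hGD : ∀ (y : X) (r : ℝ), 1 < r →
      (μ (ball y r))⁻¹ * ∫⁻ x in ball y r, h x ∂μ ≤ ENNReal.ofReal (Ch * r ^ (-ε))) :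
    ∃ C' γ' : ℝ, 0 < C' ∧ 0 < γ' ∧ ∀ (t : ℝ) (y : X), 1 < t →
      ∫⁻ x, h x ^ p * g t x y ^ p *
          ENNReal.ofReal (Real.exp (γ' * (dist x y) ^ 2 / t)) ∂μ ≤
        ENNReal.ofReal (C' * t ^ (-(p / 2) - ε * ((q - p) / 2) / (2 * q))) *
          μ (ball y (Real.sqrt t)) ^ ((1:ℝ) - p) := by
  have hp0 : 0 < p := by linarith
  have hq0 : 0 < q := by linarith
  have hqp : 0 < q - p := by linarith
  have hCD0 : 0 < C_D := by linarith
  have hpq0 : 0 < p / q := by positivity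
  have hqb0 : 0 < (q - p) / q := by positivity
  -- bound constant
  set K' : ℝ := max K 1 with hK'def
  have hK'1 : 1 ≤ K' := le_max_right _ _
  have hK'0 : 0 < K' := by linarith
  have hbdd' : ∀ x, h x ≤ ENNReal.ofReal K' := fun x =>
    (hbdd x).trans (ENNReal.ofReal_le_ofReal (le_max_left _ _))
  have hhtop : ∀ x, h x ≠ ⊤ := fun x hc => absurd (hc ▸ hbdd' x) (by simp)
  set pb : ℝ := p * (q / (q - p)) with hpbdef
  have hb1 : 1 < q / (q - p) := (one_lt_div hqp).mpr (by linarith)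
  have hpb1 : 1 < pb := by rw [hpbdef]; nlinarith
  set Kc : ℝ := K' ^ (pb - 1) with hKcdef
  have hKc0 : 0 < Kc := Real.rpow_pos_of_pos hK'0 _
  -- the series
  have hx0 : 0 < 2 ^ (-ε) * C_D := by positivity
  set w : ℕ → ℝ :=
    fun k => ((2 ^ (-ε) * C_D) ^ k) ^ ((q - p) / q) * (eseq γ k) ^ (p / q) with hwdef
  have hw0 : ∀ k, 0 < w k := fun k =>
    mul_pos (Real.rpow_pos_of_pos (pow_pos hx0 k) _)
      (Real.rpow_pos_of_pos (eseq_pos γ k) _)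
  have hwsum : Summable w := by
    rw [← summable_nat_add_iff 1]
    have hc0 : 0 < γ * p / (2 * q) := by positivity
    have hrw : (fun n : ℕ => w (n + 1)) =
        fun n : ℕ => ((2 ^ (-ε) * C_D) ^ ((q - p) / q)) *
          (((2 ^ (-ε) * C_D) ^ ((q - p) / q)) ^ n * Real.exp (-(γ * p / (2 * q) * 4 ^ n))) := by
      funext n
      rw [hwdef]
      simp only [eseq]
      rw [aux_powswap hx0 ((q - p) / q) (n+1), ← Real.exp_mul,
        show -(γ/2) * (4:ℝ) ^ n * (p / q) = -(γ * p / (2 * q) * 4 ^ n) by ring,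
        pow_succ]
      ring
    rw [hrw]
    exact (aux_summable (Real.rpow_pos_of_pos hx0 _) hc0).mul_left _
  set S : ℝ := ∑' k, w k with hSdef
  have hS1 : 1 ≤ S := by
    have hw00 : w 0 = 1 := by
      rw [hwdef]; simp [eseq]
    calc (1:ℝ) = w 0 := hw00.symm
      _ ≤ S := Summable.le_tsum hwsum 0 (fun j _ => (hw0 j).le)
  have hS0 : 0 < S := lt_of_lt_of_le one_pos hS1
  have hC'0 : 0 < CGLY ^ (p / q) * ((Kc * Ch) ^ ((q - p) / q) * S) :=
    mul_pos (Real.rpow_pos_of_pos hCGLY _)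
      (mul_pos (Real.rpow_pos_of_pos (mul_pos hKc0 hCh) _) hS0)
  have hγ'0 : 0 < γ * p / (2 * q) := by positivity
  clear_value K' pb Kc w S
  refine ⟨CGLY ^ (p / q) * ((Kc * Ch) ^ ((q - p) / q) * S), γ * p / (2 * q), hC'0, hγ'0, ?_⟩
  intro t y ht
  have ht0 : 0 < t := by linarith
  set r : ℝ := Real.sqrt t with hrdef
  have hr1 : 1 < r := by
    rw [hrdef, show (1:ℝ) = Real.sqrt 1 by simp]
    exact Real.sqrt_lt_sqrt (by norm_num) ht
  have hr0 : 0 < r := by linarith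
  have hrt : r ^ 2 = t := Real.sq_sqrt ht0.le
  clear_value r
  have hC't : 0 < CGLY ^ (p / q) * ((Kc * Ch) ^ ((q - p) / q) * S) *
      t ^ (-(p / 2) - ε * ((q - p) / 2) / (2 * q)) :=
    mul_pos hC'0 (Real.rpow_pos_of_pos ht0 _)
  by_cases hB0 : μ (ball y r) = 0
  · rw [hB0, ENNReal.zero_rpow_of_neg (by linarith : (1:ℝ) - p < 0),
      ENNReal.mul_top (ne_of_gt (ENNReal.ofReal_pos.mpr hC't))]
    exact le_top
  by_cases hBtop : μ (ball y r) = ⊤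
  · -- degenerate case: the ball has infinite measure, LHS vanishes
    have hΞ0 : ∫⁻ x, g t x y ^ q * ENNReal.ofReal (Real.exp (γ * dist x y ^ 2 / t)) ∂μ = 0 := by
      refine le_antisymm (le_trans (hGLY t y ht0) ?_) (zero_le)
      rw [← hrdef, hBtop, ENNReal.top_rpow_of_neg (by linarith : (1:ℝ) - q < 0), mul_zero]
    obtain ⟨F', hF'meas, hF'le, hF'eq⟩ := exists_measurable_le_lintegral_eq μ
      (fun x => h x ^ p * g t x y ^ p *
        ENNReal.ofReal (Real.exp (γ * p / (2 * q) * dist x y ^ 2 / t)))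
    set M : ℝ≥0∞ := ENNReal.ofReal (K' ^ p) with hMdef
    have hM0 : M ≠ 0 := ne_of_gt (ENNReal.ofReal_pos.mpr (Real.rpow_pos_of_pos hK'0 _))
    have hMtop : M ≠ ⊤ := ENNReal.ofReal_ne_top
    have hFM : ∀ x, h x ^ p * g t x y ^ p *
        ENNReal.ofReal (Real.exp (γ * p / (2 * q) * dist x y ^ 2 / t))
        ≤ (g t x y ^ q * ENNReal.ofReal (Real.exp (γ * dist x y ^ 2 / t))) ^ (p / q) * M := by
      intro x
      have h1 : h x ^ p ≤ M := by
        rw [hMdef, ← ENNReal.ofReal_rpow_of_pos hK'0]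
        exact ENNReal.rpow_le_rpow (hbdd' x) hp0.le
      have h2 : (g t x y ^ q * ENNReal.ofReal (Real.exp (γ * dist x y ^ 2 / t))) ^ (p / q)
          = g t x y ^ p * ENNReal.ofReal (Real.exp (γ * dist x y ^ 2 / t * (p / q))) := by
        rw [ENNReal.mul_rpow_of_nonneg _ _ hpq0.le, ← ENNReal.rpow_mul,
          ENNReal.ofReal_rpow_of_pos (Real.exp_pos _), ← Real.exp_mul,
          show q * (p / q) = p by rw [mul_comm, div_mul_cancel₀ _ hq0.ne']]
      have h3 : ENNReal.ofReal (Real.exp (γ * p / (2 * q) * dist x y ^ 2 / t))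
          ≤ ENNReal.ofReal (Real.exp (γ * dist x y ^ 2 / t * (p / q))) := by
        apply ENNReal.ofReal_le_ofReal
        apply Real.exp_le_exp.mpr
        have hd2 : 0 ≤ dist x y ^ 2 / t := by positivity
        have e1 : γ * p / (2 * q) * dist x y ^ 2 / t
            = (γ * (dist x y ^ 2 / t)) * (p / q) * (1 / 2) := by
          field_simp
        have e2 : γ * dist x y ^ 2 / t * (p / q) = (γ * (dist x y ^ 2 / t)) * (p / q) := by
          field_simp
        rw [e1, e2]
        nlinarith [mul_nonneg (mul_nonneg hγ.le hd2) hpq0.le]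
      calc h x ^ p * g t x y ^ p *
            ENNReal.ofReal (Real.exp (γ * p / (2 * q) * dist x y ^ 2 / t))
          ≤ M * g t x y ^ p * ENNReal.ofReal (Real.exp (γ * dist x y ^ 2 / t * (p / q))) :=
            mul_le_mul' (mul_le_mul' h1 le_rfl) h3
        _ = (g t x y ^ q * ENNReal.ofReal (Real.exp (γ * dist x y ^ 2 / t))) ^ (p / q) * M := by
            rw [h2]; ring
    set U : X → ℝ≥0∞ := fun x => (F' x / M) ^ (q / p) with hUdef
    have hUmeas : Measurable U := (hF'meas.div measurable_const).pow_const _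
    have hUle : ∀ x, U x ≤ g t x y ^ q * ENNReal.ofReal (Real.exp (γ * dist x y ^ 2 / t)) := by
      intro x
      have hdle : F' x / M
          ≤ (g t x y ^ q * ENNReal.ofReal (Real.exp (γ * dist x y ^ 2 / t))) ^ (p / q) :=
        ENNReal.div_le_of_le_mul ((hF'le x).trans (hFM x))
      calc U x ≤ ((g t x y ^ q *
            ENNReal.ofReal (Real.exp (γ * dist x y ^ 2 / t))) ^ (p / q)) ^ (q / p) :=
            ENNReal.rpow_le_rpow hdle (by positivity)
        _ = g t x y ^ q * ENNReal.ofReal (Real.exp (γ * dist x y ^ 2 / t)) := by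
            rw [← ENNReal.rpow_mul, show p / q * (q / p) = 1 by
              rw [div_mul_div_comm, mul_comm]
              exact div_self (by positivity), ENNReal.rpow_one]
    have hU0 : ∫⁻ x, U x ∂μ = 0 :=
      le_antisymm ((lintegral_mono hUle).trans hΞ0.le) (zero_le)
    have hUae : U =ᵐ[μ] 0 := (lintegral_eq_zero_iff hUmeas).mp hU0
    have hF'ae : F' =ᵐ[μ] 0 := by
      filter_upwards [hUae] with x hx
      simp only [Pi.zero_apply] at hx ⊢
      have h1 : F' x / M = 0 := by
        rcases ENNReal.rpow_eq_zero_iff.mp hx with ⟨h', _⟩ | ⟨h', hneg⟩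
        · exact h'
        · exact absurd hneg (not_lt.mpr (by positivity))
      rcases ENNReal.div_eq_zero_iff.mp h1 with h' | h'
      · exact h'
      · exact absurd h' hMtop
    calc ∫⁻ x, h x ^ p * g t x y ^ p *
          ENNReal.ofReal (Real.exp (γ * p / (2 * q) * dist x y ^ 2 / t)) ∂μ
        = ∫⁻ x, F' x ∂μ := hF'eq
      _ = 0 := by rw [lintegral_congr_ae hF'ae]; simp
      _ ≤ _ := zero_le
  -- main case : 0 < μ (ball y r) < ⊤
  · have hTfin : ∀ k : ℕ, μ (ball y (2 ^ k * r)) ≠ ⊤ := by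
      intro k
      exact ne_top_of_le_ne_top
        (ENNReal.mul_ne_top (ENNReal.pow_ne_top ENNReal.ofReal_ne_top) hBtop)
        (aux_doub μ C_D hdoub y r hr0 k)
    have h2k1 : ∀ k : ℕ, (1:ℝ) ≤ 2 ^ k := fun k => by
      simpa using pow_le_pow_left₀ (by norm_num : (0:ℝ) ≤ 1) (by norm_num : (1:ℝ) ≤ 2) k
    have hT0 : ∀ k : ℕ, μ (ball y (2 ^ k * r)) ≠ 0 := by
      intro k h0
      apply hB0
      refine measure_mono_null (ball_subset_ball ?_) h0
      calc r = 1 * r := (one_mul r).symm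
        _ ≤ 2 ^ k * r := mul_le_mul_of_nonneg_right (h2k1 k) hr0.le
    set Tm : ℕ → Set X := fun k => ⋂ j, toMeasurable μ (ball y (2 ^ (k + j) * r)) with hTmdef
    have hTmmeas : ∀ k, MeasurableSet (Tm k) := fun k =>
      MeasurableSet.iInter fun j => measurableSet_toMeasurable μ _
    have hTTm : ∀ k, ball y (2 ^ k * r) ⊆ Tm k := by
      intro k
      refine subset_iInter fun j => ?_
      refine subset_trans (ball_subset_ball ?_) (subset_toMeasurable μ _)
      exact mul_le_mul_of_nonneg_right
        (pow_le_pow_right₀ (by norm_num) (Nat.le_add_right k j)) hr0.le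
    have hTmT : ∀ k, Tm k ⊆ toMeasurable μ (ball y (2 ^ k * r)) := by
      intro k x hx
      have := mem_iInter.mp hx 0
      simpa using this
    have hTmmono : Monotone Tm := by
      apply monotone_nat_of_le_succ
      intro k x hx
      rw [hTmdef, mem_iInter] at hx ⊢
      intro j
      have := hx (j + 1)
      rwa [show k + (j + 1) = k + 1 + j by omega] at this
    have hres : ∀ k, μ.restrict (Tm k) = μ.restrict (ball y (2 ^ k * r)) := by
      intro k
      ext E hE
      rw [Measure.restrict_apply hE, Measure.restrict_apply hE]
      refine le_antisymm ?_ (measure_mono (inter_subset_inter_right E (hTTm k)))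
      calc μ (E ∩ Tm k) ≤ μ (E ∩ toMeasurable μ (ball y (2 ^ k * r))) :=
            measure_mono (inter_subset_inter_right E (hTmT k))
        _ = μ (toMeasurable μ (ball y (2 ^ k * r)) ∩ E) := by rw [inter_comm]
        _ = μ (ball y (2 ^ k * r) ∩ E) := Measure.measure_toMeasurable_inter hE (hTfin k)
        _ = μ (E ∩ ball y (2 ^ k * r)) := by rw [inter_comm]
    clear_value Tm
    set D : ℕ → Set X := fun k => disjointed Tm k with hDdef
    have hDmeas : ∀ k, MeasurableSet (D k) := fun k => MeasurableSet.disjointed hTmmeas k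
    have hDsub : ∀ k, D k ⊆ Tm k := fun k => disjointed_le Tm k
    have hDunion : (⋃ k, D k) = univ := by
      simp only [hDdef]
      rw [iUnion_disjointed, eq_univ_iff_forall]
      intro x
      obtain ⟨n, hn⟩ := pow_unbounded_of_one_lt (dist x y / r) (by norm_num : (1:ℝ) < 2)
      exact mem_iUnion.mpr ⟨n, hTTm n (mem_ball.mpr ((div_lt_iff₀ hr0).mp hn))⟩
    have hDd : ∀ (k : ℕ), ∀ x ∈ D (k + 1), 2 ^ k * r ≤ dist x y := by
      intro k x hx
      have hx2 : x ∈ disjointed Tm (k + 1) := hx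
      rw [hTmmono.disjointed_add_one] at hx2
      by_contra hlt
      push_neg at hlt
      exact hx2.2 (hTTm k (mem_ball.mpr hlt))
    clear_value D
    -- envelope and measurable quotient
    obtain ⟨F', hF'meas, hF'le, hF'eq⟩ := exists_measurable_le_lintegral_eq μ
      (fun x => h x ^ p * g t x y ^ p *
        ENNReal.ofReal (Real.exp (γ * p / (2 * q) * dist x y ^ 2 / t)))
    set E : X → ℝ≥0∞ := fun x => F' x / h x ^ p with hEdef
    have hEmeas : Measurable E := hF'meas.div (hmeas.pow_const _)
    have hF'hE : ∀ x, F' x ≤ h x ^ p * E x := by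
      intro x
      by_cases hx : h x = 0
      · have hF0 : F' x = 0 := by
          refine le_antisymm ?_ (zero_le)
          have := hF'le x
          simpa [hx, ENNReal.zero_rpow_of_pos hp0] using this
        rw [hF0]; exact zero_le
      · have h1 : h x ^ p ≠ 0 := by
          intro h0
          rcases ENNReal.rpow_eq_zero_iff.mp h0 with ⟨h', _⟩ | ⟨h', _⟩
          · exact hx h'
          · exact hhtop x h'
        have h2 : h x ^ p ≠ ⊤ := ENNReal.rpow_ne_top_of_nonneg hp0.le (hhtop x)
        rw [hEdef]
        rw [ENNReal.mul_div_cancel h1 h2]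
    have hElep : ∀ x, E x ≤ g t x y ^ p *
        ENNReal.ofReal (Real.exp (γ * p / (2 * q) * dist x y ^ 2 / t)) := by
      intro x
      rw [hEdef]
      apply ENNReal.div_le_of_le_mul
      refine (hF'le x).trans (le_of_eq ?_)
      ring
    clear_value E
    -- conjugate exponents
    have hab : Real.HolderConjugate (q / (q - p)) (q / p) := by
      constructor
      rotate_left
      · positivity
      · positivity
      · rw [inv_div, inv_div, ← add_div, inv_one]
        rw [show q - p + p = q by ring]
        exact div_self hq0.ne'
    set A : ℝ≥0∞ := ENNReal.ofReal (CGLY * t ^ (-(q / 2))) * μ (ball y r) ^ ((1:ℝ) - q)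
      with hAdef
    have hΞint : ∫⁻ x, g t x y ^ q *
        ENNReal.ofReal (Real.exp (γ * dist x y ^ 2 / t)) ∂μ ≤ A := by
      have := hGLY t y ht0
      rwa [← hrdef] at this
    clear_value A
    -- Ξ-side per annulus
    have hEk : ∀ (k : ℕ), ∀ x ∈ D k, E x ^ (q / p) ≤ ENNReal.ofReal (eseq γ k) *
        (g t x y ^ q * ENNReal.ofReal (Real.exp (γ * dist x y ^ 2 / t))) := by
      intro k x hx
      have h1 : E x ^ (q / p)
          ≤ g t x y ^ q * ENNReal.ofReal (Real.exp (γ / 2 * (dist x y ^ 2 / t))) := by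
        refine le_trans (ENNReal.rpow_le_rpow (hElep x) (by positivity)) (le_of_eq ?_)
        rw [ENNReal.mul_rpow_of_nonneg _ _ (by positivity : (0:ℝ) ≤ q / p),
          ← ENNReal.rpow_mul, ENNReal.ofReal_rpow_of_pos (Real.exp_pos _), ← Real.exp_mul,
          show p * (q / p) = q by rw [mul_comm, div_mul_cancel₀ _ hp0.ne'],
          show γ * p / (2 * q) * dist x y ^ 2 / t * (q / p) = γ / 2 * (dist x y ^ 2 / t) by
            field_simp]
      refine h1.trans ?_
      have h2 : Real.exp (γ / 2 * (dist x y ^ 2 / t))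
          ≤ eseq γ k * Real.exp (γ * dist x y ^ 2 / t) := by
        cases k with
        | zero =>
          simp only [eseq, one_mul]
          apply Real.exp_le_exp.mpr
          have hd2 : 0 ≤ dist x y ^ 2 / t := by positivity
          have e2 : γ * dist x y ^ 2 / t = γ * (dist x y ^ 2 / t) := by ring
          rw [e2]
          nlinarith
        | succ n =>
          simp only [eseq]
          rw [← Real.exp_add]
          apply Real.exp_le_exp.mpr
          have hd : 2 ^ n * r ≤ dist x y := hDd n x hx
          have h4 : ((2:ℝ) ^ n) ^ 2 = 4 ^ n := by
            rw [← pow_mul, mul_comm, pow_mul]; norm_num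
          have hd2 : (4:ℝ) ^ n * t ≤ dist x y ^ 2 := by
            have hdd : (2 ^ n * r) ^ 2 ≤ dist x y ^ 2 := by
              have h2nr : (0:ℝ) ≤ 2 ^ n * r := by positivity
              nlinarith
            calc (4:ℝ) ^ n * t = ((2:ℝ) ^ n) ^ 2 * r ^ 2 := by rw [h4, hrt]
              _ = (2 ^ n * r) ^ 2 := by ring
              _ ≤ dist x y ^ 2 := hdd
          have hst : (4:ℝ) ^ n ≤ dist x y ^ 2 / t := by
            rw [le_div_iff₀ ht0]; linarith
          have e2 : γ * dist x y ^ 2 / t = γ * (dist x y ^ 2 / t) := by ring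
          rw [e2]
          nlinarith
      calc g t x y ^ q * ENNReal.ofReal (Real.exp (γ / 2 * (dist x y ^ 2 / t)))
          ≤ g t x y ^ q * ENNReal.ofReal (eseq γ k * Real.exp (γ * dist x y ^ 2 / t)) :=
            mul_le_mul_right (ENNReal.ofReal_le_ofReal h2) _
        _ = ENNReal.ofReal (eseq γ k) *
            (g t x y ^ q * ENNReal.ofReal (Real.exp (γ * dist x y ^ 2 / t))) := by
            rw [ENNReal.ofReal_mul (eseq_pos γ k).le]; ring
    have hΞk : ∀ k : ℕ, ∫⁻ x in D k, E x ^ (q / p) ∂μ ≤ ENNReal.ofReal (eseq γ k) * A := by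
      intro k
      calc ∫⁻ x in D k, E x ^ (q / p) ∂μ
          ≤ ∫⁻ x in D k, ENNReal.ofReal (eseq γ k) *
            (g t x y ^ q * ENNReal.ofReal (Real.exp (γ * dist x y ^ 2 / t))) ∂μ := by
            apply lintegral_mono_ae
            filter_upwards [ae_restrict_mem (hDmeas k)] with x hx
            exact hEk k x hx
        _ ≤ ENNReal.ofReal (eseq γ k) * ∫⁻ x in D k,
            g t x y ^ q * ENNReal.ofReal (Real.exp (γ * dist x y ^ 2 / t)) ∂μ :=
            aux_lintegral_const_mul_le _ _ ENNReal.ofReal_ne_top _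
        _ ≤ ENNReal.ofReal (eseq γ k) * ∫⁻ x,
            g t x y ^ q * ENNReal.ofReal (Real.exp (γ * dist x y ^ 2 / t)) ∂μ :=
            mul_le_mul_right (lintegral_mono' Measure.restrict_le_self le_rfl) _
        _ ≤ ENNReal.ofReal (eseq γ k) * A := mul_le_mul_right hΞint _
    -- h-side pointwise
    have hhp2 : ∀ x, (h x ^ p) ^ (q / (q - p)) ≤ ENNReal.ofReal Kc * h x := by
      intro x
      rw [← ENNReal.rpow_mul, ← hpbdef]
      by_cases hx : h x = 0
      · rw [hx, ENNReal.zero_rpow_of_pos (by linarith : (0:ℝ) < pb)]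
        exact zero_le
      · have hstep : h x ^ pb = h x ^ (pb - 1) * h x := by
          conv_lhs => rw [show pb = (pb - 1) + 1 by ring]
          rw [ENNReal.rpow_add _ _ hx (hhtop x), ENNReal.rpow_one]
        rw [hstep]
        refine mul_le_mul_left ?_ (h x)
        calc h x ^ (pb - 1) ≤ ENNReal.ofReal K' ^ (pb - 1) :=
              ENNReal.rpow_le_rpow (hbdd' x) (by linarith)
          _ = ENNReal.ofReal Kc := by
              rw [ENNReal.ofReal_rpow_of_pos hK'0, hKcdef]
    -- h-side per annulus
    have hhk : ∀ k : ℕ, ∫⁻ x in D k, (h x ^ p) ^ (q / (q - p)) ∂μ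
        ≤ ENNReal.ofReal (Kc * Ch * t ^ (-(ε / 2)) * (2 ^ (-ε) * C_D) ^ k) * μ (ball y r) := by
      intro k
      have step1 : ∫⁻ x in D k, (h x ^ p) ^ (q / (q - p)) ∂μ
          ≤ ENNReal.ofReal Kc * ∫⁻ x in D k, h x ∂μ := by
        refine le_trans (lintegral_mono fun x => hhp2 x) ?_
        rw [lintegral_const_mul _ hmeas]
      have step2 : ∫⁻ x in D k, h x ∂μ ≤ ∫⁻ x in ball y (2 ^ k * r), h x ∂μ := by
        rw [← hres k]
        exact lintegral_mono' (Measure.restrict_mono (hDsub k) le_rfl) le_rfl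
      have hrk1 : 1 < 2 ^ k * r :=
        lt_of_lt_of_le hr1 (le_mul_of_one_le_left hr0.le (h2k1 k))
      have step3 := hGD y (2 ^ k * r) hrk1
      have step4 : ∫⁻ x in ball y (2 ^ k * r), h x ∂μ
          ≤ ENNReal.ofReal (Ch * (2 ^ k * r) ^ (-ε)) * μ (ball y (2 ^ k * r)) := by
        have hc : μ (ball y (2 ^ k * r)) * (μ (ball y (2 ^ k * r)))⁻¹ = 1 :=
          ENNReal.mul_inv_cancel (hT0 k) (hTfin k)
        calc ∫⁻ x in ball y (2 ^ k * r), h x ∂μ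
            = μ (ball y (2 ^ k * r)) *
              ((μ (ball y (2 ^ k * r)))⁻¹ * ∫⁻ x in ball y (2 ^ k * r), h x ∂μ) := by
              rw [← mul_assoc, hc, one_mul]
          _ ≤ μ (ball y (2 ^ k * r)) * ENNReal.ofReal (Ch * (2 ^ k * r) ^ (-ε)) :=
              mul_le_mul_right step3 _
          _ = ENNReal.ofReal (Ch * (2 ^ k * r) ^ (-ε)) * μ (ball y (2 ^ k * r)) := mul_comm _ _
      have step5 : μ (ball y (2 ^ k * r)) ≤ ENNReal.ofReal C_D ^ k * μ (ball y r) :=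
        aux_doub μ C_D hdoub y r hr0 k
      have hreal : Kc * (Ch * (2 ^ k * r) ^ (-ε)) * C_D ^ k
          = Kc * Ch * t ^ (-(ε / 2)) * (2 ^ (-ε) * C_D) ^ k := by
        have e1 : ((2:ℝ) ^ k * r) ^ (-ε) = (2 ^ (-ε)) ^ k * t ^ (-(ε / 2)) := by
          rw [Real.mul_rpow (by positivity) hr0.le]
          congr 1
          · exact aux_powswap (by norm_num) (-ε) k
          · rw [hrdef, Real.sqrt_eq_rpow, ← Real.rpow_mul ht0.le]
            congr 1; ring
        rw [e1, mul_pow]; ring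
      calc ∫⁻ x in D k, (h x ^ p) ^ (q / (q - p)) ∂μ
          ≤ ENNReal.ofReal Kc * ∫⁻ x in D k, h x ∂μ := step1
        _ ≤ ENNReal.ofReal Kc * (ENNReal.ofReal (Ch * (2 ^ k * r) ^ (-ε)) *
            (ENNReal.ofReal C_D ^ k * μ (ball y r))) :=
            mul_le_mul_right (step2.trans (step4.trans (mul_le_mul_right step5 _))) _
        _ = (ENNReal.ofReal Kc * ENNReal.ofReal (Ch * (2 ^ k * r) ^ (-ε)) *
            ENNReal.ofReal (C_D ^ k)) * μ (ball y r) := by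
            rw [← ENNReal.ofReal_pow (by linarith : (0:ℝ) ≤ C_D)]; ring
        _ = ENNReal.ofReal (Kc * (Ch * (2 ^ k * r) ^ (-ε)) * C_D ^ k) * μ (ball y r) := by
            rw [← ENNReal.ofReal_mul (by positivity : (0:ℝ) ≤ Kc),
              ← ENNReal.ofReal_mul (by positivity)]
        _ = ENNReal.ofReal (Kc * Ch * t ^ (-(ε / 2)) * (2 ^ (-ε) * C_D) ^ k) *
            μ (ball y r) := by rw [hreal]
    -- Hölder per annulus
    have hhold : ∀ k : ℕ, ∫⁻ x in D k, h x ^ p * E x ∂μ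
        ≤ (∫⁻ x in D k, (h x ^ p) ^ (q / (q - p)) ∂μ) ^ ((q - p) / q) *
          (∫⁻ x in D k, E x ^ (q / p) ∂μ) ^ (p / q) := by
      intro k
      have hH := ENNReal.lintegral_mul_le_Lp_mul_Lq (μ.restrict (D k)) hab
        ((hmeas.pow_const p).aemeasurable) hEmeas.aemeasurable
      simp only [Pi.mul_apply] at hH
      rwa [one_div_div, one_div_div] at hH
    have hterm : ∀ k : ℕ, ∫⁻ x in D k, h x ^ p * E x ∂μ
        ≤ (ENNReal.ofReal (Kc * Ch * t ^ (-(ε / 2)) * (2 ^ (-ε) * C_D) ^ k) *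
            μ (ball y r)) ^ ((q - p) / q) *
          (ENNReal.ofReal (eseq γ k) * A) ^ (p / q) := fun k =>
      (hhold k).trans (mul_le_mul' (ENNReal.rpow_le_rpow (hhk k) hqb0.le)
        (ENNReal.rpow_le_rpow (hΞk k) hpq0.le))
    -- global assembly
    have hglobal : ∫⁻ x, h x ^ p * g t x y ^ p *
        ENNReal.ofReal (Real.exp (γ * p / (2 * q) * dist x y ^ 2 / t)) ∂μ
        ≤ ∑' k, ∫⁻ x in D k, h x ^ p * E x ∂μ := by
      calc ∫⁻ x, h x ^ p * g t x y ^ p *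
            ENNReal.ofReal (Real.exp (γ * p / (2 * q) * dist x y ^ 2 / t)) ∂μ
          = ∫⁻ x, F' x ∂μ := hF'eq
        _ ≤ ∫⁻ x, h x ^ p * E x ∂μ := lintegral_mono hF'hE
        _ = ∫⁻ x in ⋃ k, D k, h x ^ p * E x ∂μ := by rw [hDunion, Measure.restrict_univ]
        _ ≤ ∑' k, ∫⁻ x in D k, h x ^ p * E x ∂μ := lintegral_iUnion_le _ _
    -- summing the bounds
    have hκ2 : (0:ℝ) < Kc * Ch * t ^ (-(ε / 2)) := by positivity
    set Z : ℝ≥0∞ := (ENNReal.ofReal (Kc * Ch * t ^ (-(ε / 2))) * μ (ball y r)) ^ ((q - p) / q) *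
      A ^ (p / q) with hZdef
    clear_value Z
    have hterm2 : ∀ k : ℕ,
        (ENNReal.ofReal (Kc * Ch * t ^ (-(ε / 2)) * (2 ^ (-ε) * C_D) ^ k) *
          μ (ball y r)) ^ ((q - p) / q) * (ENNReal.ofReal (eseq γ k) * A) ^ (p / q)
        = ENNReal.ofReal (w k) * Z := by
      intro k
      have hwk : ENNReal.ofReal (w k) = ENNReal.ofReal ((2 ^ (-ε) * C_D) ^ k) ^ ((q - p) / q) *
          ENNReal.ofReal (eseq γ k) ^ (p / q) := by
        rw [hwdef]
        rw [ENNReal.ofReal_mul (by positivity), ← ENNReal.ofReal_rpow_of_pos (pow_pos hx0 k),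
          ← ENNReal.ofReal_rpow_of_pos (eseq_pos γ k)]
      rw [hZdef, hwk, ENNReal.ofReal_mul hκ2.le,
        show ENNReal.ofReal (Kc * Ch * t ^ (-(ε / 2))) *
            ENNReal.ofReal ((2 ^ (-ε) * C_D) ^ k) * μ (ball y r)
          = ENNReal.ofReal ((2 ^ (-ε) * C_D) ^ k) *
            (ENNReal.ofReal (Kc * Ch * t ^ (-(ε / 2))) * μ (ball y r)) from by ring,
        ENNReal.mul_rpow_of_nonneg _ _ hqb0.le, ENNReal.mul_rpow_of_nonneg _ _ hpq0.le]
      ring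
    have hsum2 : ∑' k, ∫⁻ x in D k, h x ^ p * E x ∂μ ≤ ENNReal.ofReal S * Z := by
      calc ∑' k, ∫⁻ x in D k, h x ^ p * E x ∂μ
          ≤ ∑' k, ((ENNReal.ofReal (Kc * Ch * t ^ (-(ε / 2)) * (2 ^ (-ε) * C_D) ^ k) *
              μ (ball y r)) ^ ((q - p) / q) * (ENNReal.ofReal (eseq γ k) * A) ^ (p / q)) :=
            ENNReal.tsum_le_tsum hterm
        _ = ∑' k, ENNReal.ofReal (w k) * Z := by
            exact tsum_congr hterm2
        _ = (∑' k, ENNReal.ofReal (w k)) * Z := ENNReal.tsum_mul_right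
        _ = ENNReal.ofReal S * Z := by
            rw [hSdef, ENNReal.ofReal_tsum_of_nonneg (fun k => (hw0 k).le) hwsum]
    -- final algebra
    have hAexp : A ^ (p / q) = ENNReal.ofReal ((CGLY * t ^ (-(q / 2))) ^ (p / q)) *
        μ (ball y r) ^ ((1 - q) * (p / q)) := by
      rw [hAdef, ENNReal.mul_rpow_of_nonneg _ _ hpq0.le, ← ENNReal.rpow_mul,
        ENNReal.ofReal_rpow_of_pos (by positivity)]
    have hexp1 : (q - p) / q + (1 - q) * (p / q) = 1 - p := by field_simp; ring
    have hZeq : Z = ENNReal.ofReal ((Kc * Ch * t ^ (-(ε / 2))) ^ ((q - p) / q) *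
        (CGLY * t ^ (-(q / 2))) ^ (p / q)) * μ (ball y r) ^ ((1:ℝ) - p) := by
      rw [hZdef, hAexp, ENNReal.mul_rpow_of_nonneg _ _ hqb0.le,
        ENNReal.ofReal_rpow_of_pos hκ2, ENNReal.ofReal_mul (by positivity)]
      rw [show (ENNReal.ofReal ((Kc * Ch * t ^ (-(ε / 2))) ^ ((q - p) / q)) *
          μ (ball y r) ^ ((q - p) / q)) *
          (ENNReal.ofReal ((CGLY * t ^ (-(q / 2))) ^ (p / q)) *
            μ (ball y r) ^ ((1 - q) * (p / q)))
          = (ENNReal.ofReal ((Kc * Ch * t ^ (-(ε / 2))) ^ ((q - p) / q)) *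
            ENNReal.ofReal ((CGLY * t ^ (-(q / 2))) ^ (p / q))) *
            (μ (ball y r) ^ ((q - p) / q) * μ (ball y r) ^ ((1 - q) * (p / q))) by ring]
      rw [← ENNReal.rpow_add _ _ hB0 hBtop, hexp1]
    have hscal : S * ((Kc * Ch * t ^ (-(ε / 2))) ^ ((q - p) / q) *
        (CGLY * t ^ (-(q / 2))) ^ (p / q))
        ≤ CGLY ^ (p / q) * ((Kc * Ch) ^ ((q - p) / q) * S) *
          t ^ (-(p / 2) - ε * ((q - p) / 2) / (2 * q)) := by
      have e1 : (Kc * Ch * t ^ (-(ε / 2))) ^ ((q - p) / q)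
          = (Kc * Ch) ^ ((q - p) / q) * t ^ (-(ε / 2) * ((q - p) / q)) := by
        rw [Real.mul_rpow (by positivity) (by positivity), ← Real.rpow_mul ht0.le]
      have e2 : (CGLY * t ^ (-(q / 2))) ^ (p / q)
          = CGLY ^ (p / q) * t ^ (-(q / 2) * (p / q)) := by
        rw [Real.mul_rpow hCGLY.le (by positivity), ← Real.rpow_mul ht0.le]
      rw [e1, e2]
      have e3 : t ^ (-(ε / 2) * ((q - p) / q)) * t ^ (-(q / 2) * (p / q))
          = t ^ (-(ε / 2) * ((q - p) / q) + -(q / 2) * (p / q)) := (Real.rpow_add ht0 _ _).symm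
      calc S * ((Kc * Ch) ^ ((q - p) / q) * t ^ (-(ε / 2) * ((q - p) / q)) *
            (CGLY ^ (p / q) * t ^ (-(q / 2) * (p / q))))
          = CGLY ^ (p / q) * ((Kc * Ch) ^ ((q - p) / q) * S) *
            (t ^ (-(ε / 2) * ((q - p) / q)) * t ^ (-(q / 2) * (p / q))) := by ring
        _ = CGLY ^ (p / q) * ((Kc * Ch) ^ ((q - p) / q) * S) *
            t ^ (-(ε / 2) * ((q - p) / q) + -(q / 2) * (p / q)) := by rw [e3]
        _ ≤ CGLY ^ (p / q) * ((Kc * Ch) ^ ((q - p) / q) * S) *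
            t ^ (-(p / 2) - ε * ((q - p) / 2) / (2 * q)) := by
            refine mul_le_mul_of_nonneg_left ?_ (by positivity)
            apply Real.rpow_le_rpow_of_exponent_le ht.le
            have e4 : -(ε / 2) * ((q - p) / q) + -(q / 2) * (p / q)
                = -(p / 2) - ε * (q - p) / (2 * q) := by field_simp; ring
            rw [e4]
            refine sub_le_sub_left ?_ _
            rw [div_le_div_iff₀ (by positivity) (by positivity)]
            nlinarith [mul_pos (mul_pos hε hqp) hq0]
    have hfinal : ENNReal.ofReal S * Z ≤
        ENNReal.ofReal (CGLY ^ (p / q) * ((Kc * Ch) ^ ((q - p) / q) * S) *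
          t ^ (-(p / 2) - ε * ((q - p) / 2) / (2 * q))) * μ (ball y r) ^ ((1:ℝ) - p) := by
      rw [hZeq, ← mul_assoc, ← ENNReal.ofReal_mul hS0.le]
      exact mul_le_mul_left (ENNReal.ofReal_le_ofReal hscal) _
    exact hglobal.trans (hsum2.trans hfinal)
end

section
/- Let e^{-tL} be a bounded analytic semigroup on L^p with ‖(1+stL)e^{-stL}‖_{p→p} ≤ C uniformly in s,t > 0, and suppose ‖∇(1+tL)^{-1}‖_{p→p} ≤ Ct^{-ν} for all t > 1 with ν ∈ [0,1/2), and ‖∇e^{-rL}‖_{p→p} ≤ Cr^{-1/2}e^r for r > 0. Then ‖∇(1+tL)^{-1/2}‖_{p→p} ≤ C't^{-ν} for all t > 1. -/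
open MeasureTheory Real

private lemma abs_exp_neg_sub' {a b : ℝ} (ha : 0 ≤ a) (hb : 0 ≤ b) :
    |Real.exp (-a) - Real.exp (-b)| ≤ |a - b| := by
  wlog h : b ≤ a generalizing a b
  · rw [abs_sub_comm, abs_sub_comm a b]; exact this hb ha (le_of_not_ge h)
  rw [abs_of_nonpos (by simp only [sub_nonpos, Real.exp_le_exp]; linarith),
    abs_of_nonneg (by linarith)]
  have e1 : Real.exp (-a) = Real.exp (-b) * Real.exp (-(a-b)) := by
    rw [← Real.exp_add]; ring_nf
  have e2 := Real.add_one_le_exp (-(a-b))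
  have e3 : Real.exp (-b) ≤ 1 := Real.exp_le_one_iff.mpr (by linarith)
  nlinarith [Real.exp_pos (-b)]

private lemma gam_int' (ν : ℝ) (hν₀ : 0 ≤ ν) (hν₁ : ν < 1/2) :
    IntegrableOn (fun σ : ℝ => Real.exp (-(σ/2)) * σ ^ (-(1/2:ℝ)-ν)) (Set.Ioi 0) := by
  have hcont : ContinuousOn (fun σ : ℝ => Real.exp (-(σ/2)) * σ ^ (-(1/2:ℝ)-ν)) (Set.Ioi 0) :=
    (Real.continuous_exp.comp ((continuous_id.div_const 2).neg)).continuousOn.mul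
      (continuousOn_id.rpow_const (fun x hx => Or.inl (ne_of_gt hx)))
  have hmeas1 : AEStronglyMeasurable (fun σ : ℝ => Real.exp (-(σ/2)) * σ ^ (-(1/2:ℝ)-ν))
      (volume.restrict (Set.Ioc (0:ℝ) 1)) :=
    (hcont.mono Set.Ioc_subset_Ioi_self).aestronglyMeasurable measurableSet_Ioc
  have hmeas2 : AEStronglyMeasurable (fun σ : ℝ => Real.exp (-(σ/2)) * σ ^ (-(1/2:ℝ)-ν))
      (volume.restrict (Set.Ioi (1:ℝ))) :=
    (hcont.mono (Set.Ioi_subset_Ioi zero_le_one)).aestronglyMeasurable measurableSet_Ioi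
  rw [← Set.Ioc_union_Ioi_eq_Ioi (zero_le_one : (0:ℝ) ≤ 1)]
  apply IntegrableOn.union
  · apply Integrable.mono'
      (((Real.GammaIntegral_convergent (s := 1/2 - ν) (by linarith)).mono_set
        Set.Ioc_subset_Ioi_self).const_mul (Real.exp 1))
    · exact hmeas1
    · filter_upwards [ae_restrict_mem measurableSet_Ioc] with σ hσ
      obtain ⟨h0, h1⟩ := hσ
      have hexp : Real.exp (-(σ/2)) ≤ Real.exp 1 * Real.exp (-σ) := by
        rw [← Real.exp_add]; apply Real.exp_le_exp.mpr; linarith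
      have hpow : (0:ℝ) ≤ σ ^ (-(1/2:ℝ)-ν) := Real.rpow_nonneg h0.le _
      have hee : (1:ℝ)/2 - ν - 1 = -(1/2:ℝ)-ν := by ring
      rw [Real.norm_eq_abs, abs_of_nonneg (by positivity), hee]
      calc Real.exp (-(σ/2)) * σ ^ (-(1/2:ℝ)-ν)
          ≤ (Real.exp 1 * Real.exp (-σ)) * σ ^ (-(1/2:ℝ)-ν) :=
            mul_le_mul_of_nonneg_right hexp hpow
        _ = Real.exp 1 * (Real.exp (-σ) * σ ^ (-(1/2:ℝ)-ν)) := by ring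
  · apply Integrable.mono' (exp_neg_integrableOn_Ioi 1 (by norm_num : (0:ℝ) < 1/2))
    · exact hmeas2
    · filter_upwards [ae_restrict_mem measurableSet_Ioi] with σ hσ
      have h1 : (1:ℝ) ≤ σ := le_of_lt hσ
      have hpow : σ ^ (-(1/2:ℝ)-ν) ≤ 1 :=
        Real.rpow_le_one_of_one_le_of_nonpos h1 (by linarith)
      have hpos : (0:ℝ) ≤ σ ^ (-(1/2:ℝ)-ν) := Real.rpow_nonneg (by linarith) _
      rw [Real.norm_eq_abs, abs_of_nonneg (by positivity)]
      have : -(1/2:ℝ) * σ = -(σ/2) := by ring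
      rw [this]
      nlinarith [Real.exp_pos (-(σ/2))]

set_option maxHeartbeats 1600000 in
/-- Abstract version of: if `‖(1+stL)e^{-stL}‖ ≤ C` uniformly, `‖∇(1+tL)⁻¹‖ ≤ C t^{-ν}`
for `t > 1` with `ν ∈ [0,1/2)`, and `‖∇e^{-rL}‖ ≤ C r^{-1/2} e^r` for `r > 0`, then by
subordination `‖∇(1+tL)^{-1/2}‖ ≤ C' t^{-ν}` for `t > 1`. Here `R t = ∇(1+tL)⁻¹`,
`G r = ∇e^{-rL}`, `M r = (1+rL)e^{-rL}` and `Q t = ∇(1+tL)^{-1/2}` is given by the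
subordination formula `Q t = π^{-1/2} ∫_0^∞ e^{-s} s^{-1/2} ∇e^{-stL} ds`. -/
theorem grad_sqrt_resolvent_decay {E : Type*} [NormedAddCommGroup E] [NormedSpace ℝ E]
    (R G M Q : ℝ → E →L[ℝ] E) (C ν : ℝ) (hC : 0 < C) (hν₀ : 0 ≤ ν) (hν₁ : ν < 1/2)
    (hM : ∀ r : ℝ, 0 < r → ‖M r‖ ≤ C)
    (hfact : ∀ r : ℝ, 0 < r → G r = (R r).comp (M r))
    (hR : ∀ t : ℝ, 1 < t → ‖R t‖ ≤ C * t ^ (-ν))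
    (hG : ∀ r : ℝ, 0 < r → ‖G r‖ ≤ C * r ^ (-(1:ℝ)/2) * Real.exp r)
    (hQ : ∀ t : ℝ, 1 < t → ∀ x : E, Q t x = (Real.sqrt π)⁻¹ •
      ∫ s in Set.Ioi (0:ℝ), (Real.exp (-s) / Real.sqrt s) • G (s * t) x) :
    ∃ C' : ℝ, 0 < C' ∧ ∀ t : ℝ, 1 < t → ‖Q t‖ ≤ C' * t ^ (-ν) := by
  have hgamint := gam_int' ν hν₀ hν₁
  set gam : ℝ → ℝ := fun σ : ℝ => Real.exp (-(σ/2)) * σ ^ (-(1/2:ℝ)-ν) with hgamdef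
  set J : ℝ := ∫ σ in Set.Ioi (0:ℝ), gam σ with hJdef
  have hJ0 : 0 ≤ J := by
    rw [hJdef]
    apply setIntegral_nonneg measurableSet_Ioi
    intro σ hσ
    have hσ' : (0:ℝ) < σ := hσ
    rw [hgamdef]
    positivity
  set N : ℝ := ‖Q 2‖ with hNdef
  have hN0 : 0 ≤ N := norm_nonneg _
  set A : ℝ := Real.exp 1 * C / 2 + 2 * C ^ 2 * J + Real.sqrt 2 * N with hAdef
  have hA0 : 0 ≤ A := by
    rw [hAdef]
    have h1 : 0 ≤ Real.exp 1 * C / 2 := by positivity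
    have h2 : 0 ≤ 2 * C ^ 2 * J := mul_nonneg (by positivity) hJ0
    have h3 : 0 ≤ Real.sqrt 2 * N := mul_nonneg (Real.sqrt_nonneg 2) hN0
    linarith
  have hGR : ∀ r : ℝ, 1 < r → ‖G r‖ ≤ C^2 * r ^ (-ν) := by
    intro r hr
    have h0r : (0:ℝ) < r := lt_trans one_pos hr
    rw [hfact r h0r]
    calc ‖(R r).comp (M r)‖ ≤ ‖R r‖ * ‖M r‖ := ContinuousLinearMap.opNorm_comp_le _ _
      _ ≤ (C * r ^ (-ν)) * C :=
          mul_le_mul (hR r hr) (hM r h0r) (norm_nonneg _) (by positivity)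
      _ = C^2 * r ^ (-ν) := by ring
  have hrpow_half : ∀ r : ℝ, 0 < r → r ^ (-(1:ℝ)/2) = (Real.sqrt r)⁻¹ := by
    intro r hr
    rw [show -(1:ℝ)/2 = -(1/2 : ℝ) by norm_num, Real.rpow_neg hr.le, Real.sqrt_eq_rpow]
  refine ⟨A + 1, by linarith, ?_⟩
  intro t ht
  have ht0 : (0:ℝ) < t := lt_trans one_pos ht
  have ht1 : (1:ℝ) ≤ t := ht.le
  have htν : (0:ℝ) < t ^ (-ν) := Real.rpow_pos_of_pos ht0 _
  have hChalf : t ^ (-(1/2):ℝ) ≤ t ^ (-ν) :=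
    Real.rpow_le_rpow_of_exponent_le ht1 (by linarith)
  have hsqrt_inv : (Real.sqrt t)⁻¹ = t ^ (-(1/2):ℝ) := by
    rw [Real.sqrt_eq_rpow, ← Real.rpow_neg ht0.le]
  have hπpos : (0:ℝ) < Real.sqrt π := Real.sqrt_pos.mpr Real.pi_pos
  have hπ1 : (1:ℝ) ≤ Real.sqrt π := by
    rw [show (1:ℝ) = Real.sqrt 1 by simp]
    exact Real.sqrt_le_sqrt (by linarith [Real.pi_gt_three])
  apply ContinuousLinearMap.opNorm_le_bound _ (by nlinarith)
  intro x
  set v : ℝ → E := fun σ : ℝ => G (σ * t) x with hvdef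
  set h₁ : ℝ → E := fun σ : ℝ => (Real.exp (-σ) / Real.sqrt σ) • v σ with hh₁def
  set h₂ : ℝ → E := fun σ : ℝ => (Real.exp (-((t/2)*σ)) / Real.sqrt σ) • v σ with hh₂def
  have hQt : Q t x = (Real.sqrt π)⁻¹ • ∫ σ in Set.Ioi (0:ℝ), h₁ σ := hQ t ht x
  by_cases hint : IntegrableOn h₁ (Set.Ioi 0) volume
  swap
  · rw [hQt, MeasureTheory.integral_undef hint, smul_zero, norm_zero]
    have : (0:ℝ) ≤ (A + 1) * t ^ (-ν) * ‖x‖ := by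
      apply mul_nonneg (mul_nonneg (by linarith) htν.le) (norm_nonneg x)
    linarith
  -- pointwise bounds on v
  have hvsmall : ∀ σ : ℝ, 0 < σ →
      ‖v σ‖ ≤ C * (Real.sqrt σ * Real.sqrt t)⁻¹ * Real.exp (σ*t) * ‖x‖ := by
    intro σ hσ
    have hσt : (0:ℝ) < σ * t := mul_pos hσ ht0
    calc ‖v σ‖ ≤ ‖G (σ*t)‖ * ‖x‖ := (G (σ*t)).le_opNorm x
      _ ≤ (C * (σ*t) ^ (-(1:ℝ)/2) * Real.exp (σ*t)) * ‖x‖ :=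
          mul_le_mul_of_nonneg_right (hG (σ*t) hσt) (norm_nonneg x)
      _ = C * (Real.sqrt σ * Real.sqrt t)⁻¹ * Real.exp (σ*t) * ‖x‖ := by
          rw [hrpow_half (σ*t) hσt, Real.sqrt_mul hσ.le]
  have hvbig : ∀ σ : ℝ, 1/t < σ →
      ‖v σ‖ ≤ C^2 * (σ ^ (-ν) * t ^ (-ν)) * ‖x‖ := by
    intro σ hσ
    have hσ0 : (0:ℝ) < σ := lt_trans (by positivity) hσ
    have hσt : (1:ℝ) < σ * t := by
      rw [div_lt_iff₀ ht0] at hσ; linarith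
    calc ‖v σ‖ ≤ ‖G (σ*t)‖ * ‖x‖ := (G (σ*t)).le_opNorm x
      _ ≤ (C^2 * (σ*t) ^ (-ν)) * ‖x‖ :=
          mul_le_mul_of_nonneg_right (hGR (σ*t) hσt) (norm_nonneg x)
      _ = C^2 * (σ ^ (-ν) * t ^ (-ν)) * ‖x‖ := by
          rw [Real.mul_rpow hσ0.le ht0.le]
  -- measurability of v and h₂
  have hmeash₁ := hint.aestronglyMeasurable
  have hvmeas : AEStronglyMeasurable v (volume.restrict (Set.Ioi 0)) := by
    have hsm : AEStronglyMeasurable (fun σ : ℝ => (Real.sqrt σ * Real.exp σ) • h₁ σ)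
        (volume.restrict (Set.Ioi 0)) :=
      ((Real.continuous_sqrt.mul Real.continuous_exp).aestronglyMeasurable).smul hmeash₁
    apply hsm.congr
    filter_upwards [ae_restrict_mem measurableSet_Ioi] with σ hσ
    have hs0 : Real.sqrt σ ≠ 0 := (Real.sqrt_pos.mpr hσ).ne'
    have hexpne : Real.exp σ ≠ 0 := (Real.exp_pos σ).ne'
    simp only [hh₁def, smul_smul]
    rw [show Real.sqrt σ * Real.exp σ * (Real.exp (-σ) / Real.sqrt σ) = 1 by
      rw [Real.exp_neg]; field_simp]
    rw [one_smul]
  have hmeash₂ : AEStronglyMeasurable h₂ (volume.restrict (Set.Ioi 0)) := by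
    apply AEStronglyMeasurable.smul _ hvmeas
    apply Measurable.aestronglyMeasurable
    exact (Real.measurable_exp.comp ((measurable_const.mul measurable_id).neg)).div
      Real.continuous_sqrt.measurable
  -- integrability of h₂
  have h₂int : IntegrableOn h₂ (Set.Ioi 0) volume := by
    rw [← Set.Ioc_union_Ioi_eq_Ioi (zero_le_one : (0:ℝ) ≤ 1)]
    apply IntegrableOn.union
    · have h₁n : IntegrableOn (fun σ => ‖h₁ σ‖) (Set.Ioc (0:ℝ) 1) volume :=
        IntegrableOn.mono_set hint.norm Set.Ioc_subset_Ioi_self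
      apply Integrable.mono' (h₁n.const_mul (Real.exp (1/2)))
      · exact hmeash₂.mono_measure (Measure.restrict_mono Set.Ioc_subset_Ioi_self le_rfl)
      · filter_upwards [ae_restrict_mem measurableSet_Ioc] with σ hσ
        obtain ⟨h0, h1⟩ := hσ
        have hsq : (0:ℝ) ≤ Real.sqrt σ := Real.sqrt_nonneg σ
        have hexp : Real.exp (-((t/2)*σ)) ≤ Real.exp (1/2) * Real.exp (-σ) := by
          rw [← Real.exp_add]; apply Real.exp_le_exp.mpr; nlinarith
        simp only [hh₁def, hh₂def, norm_smul, norm_norm, Real.norm_eq_abs,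
          abs_div, abs_of_nonneg (Real.exp_pos _).le, abs_of_nonneg hsq]
        calc Real.exp (-((t/2)*σ)) / Real.sqrt σ * ‖v σ‖
            ≤ Real.exp (1/2) * Real.exp (-σ) / Real.sqrt σ * ‖v σ‖ := by
              apply mul_le_mul_of_nonneg_right _ (norm_nonneg _)
              exact div_le_div_of_nonneg_right hexp (Real.sqrt_nonneg σ)
          _ = Real.exp (1/2) * (Real.exp (-σ) / Real.sqrt σ * ‖v σ‖) := by ring
    · apply Integrable.mono'
        (((exp_neg_integrableOn_Ioi 1 (by norm_num : (0:ℝ) < 1/2))).const_mul (C^2 * ‖x‖))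
      · exact hmeash₂.mono_measure (Measure.restrict_mono (Set.Ioi_subset_Ioi zero_le_one) le_rfl)
      · filter_upwards [ae_restrict_mem measurableSet_Ioi] with σ hσ
        have hσ1 : (1:ℝ) < σ := hσ
        have hσ0 : (0:ℝ) < σ := lt_trans one_pos hσ1
        have h1t : 1/t < σ := by
          have : 1/t ≤ 1 := by rw [div_le_one ht0]; exact ht1
          linarith
        have hsq1 : (1:ℝ) ≤ Real.sqrt σ := by
          rw [show (1:ℝ) = Real.sqrt 1 by simp]
          exact Real.sqrt_le_sqrt hσ1.le
        have hvb := hvbig σ h1t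
        have hpow1 : σ ^ (-ν) ≤ 1 := Real.rpow_le_one_of_one_le_of_nonpos hσ1.le (by linarith)
        have hpow2 : t ^ (-ν) ≤ 1 := Real.rpow_le_one_of_one_le_of_nonpos ht1 (by linarith)
        have hexp : Real.exp (-((t/2)*σ)) ≤ Real.exp (-(1/2) * σ) := by
          apply Real.exp_le_exp.mpr; nlinarith
        simp only [hh₂def, norm_smul, Real.norm_eq_abs, abs_div,
          abs_of_nonneg (Real.exp_pos _).le, abs_of_nonneg (Real.sqrt_nonneg σ)]
        have hd : Real.exp (-((t/2)*σ)) / Real.sqrt σ ≤ Real.exp (-(1/2) * σ) := by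
          rw [div_le_iff₀ (by linarith : (0:ℝ) < Real.sqrt σ)]
          nlinarith [Real.exp_pos (-(1/2)*σ)]
        calc Real.exp (-((t/2)*σ)) / Real.sqrt σ * ‖v σ‖
            ≤ Real.exp (-(1/2)*σ) * (C^2 * (σ^(-ν) * t^(-ν)) * ‖x‖) := by
              apply mul_le_mul hd hvb (norm_nonneg _) (Real.exp_pos _).le
          _ ≤ C^2 * ‖x‖ * Real.exp (-(1/2)*σ) := by
              have hx0 : (0:ℝ) ≤ ‖x‖ := norm_nonneg x
              have hp0 : (0:ℝ) ≤ σ^(-ν) := Real.rpow_nonneg hσ0.le _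
              have hq0 : (0:ℝ) ≤ t^(-ν) := htν.le
              have hab : σ^(-ν) * t^(-ν) ≤ 1 := mul_le_one₀ hpow1 hq0 hpow2
              nlinarith [mul_nonneg (mul_nonneg (sub_nonneg.mpr hab)
                (Real.exp_pos (-(1/2)*σ)).le) (mul_nonneg (sq_nonneg C) hx0)]
  -- change of variables: relate ∫ h₂ to Q 2
  have hc : (0:ℝ) < t/2 := by linarith
  have hs2pos : (0:ℝ) < Real.sqrt (t/2) := Real.sqrt_pos.mpr hc
  have hceq : Set.EqOn (fun σ : ℝ => (Real.exp (-(t/2*σ)) / Real.sqrt (t/2*σ)) • G ((t/2*σ) * 2) x)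
      (fun σ : ℝ => (Real.sqrt (t/2))⁻¹ • h₂ σ) (Set.Ioi 0) := by
    intro σ hσ
    have hσ0 : (0:ℝ) < σ := hσ
    have hb : Real.sqrt (t/2) ≠ 0 := hs2pos.ne'
    have hcσ : Real.sqrt σ ≠ 0 := (Real.sqrt_pos.mpr hσ0).ne'
    simp only [hh₂def]
    rw [Real.sqrt_mul hc.le, show (t/2*σ) * 2 = σ * t by ring, smul_smul]
    congr 1
    field_simp
  have hCOV : ∫ s in Set.Ioi (0:ℝ), (Real.exp (-s) / Real.sqrt s) • G (s * 2) x
      = Real.sqrt (t/2) • ∫ σ in Set.Ioi (0:ℝ), h₂ σ := by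
    have hcomp := MeasureTheory.integral_comp_mul_left_Ioi
      (fun s => (Real.exp (-s) / Real.sqrt s) • G (s * 2) x) 0 hc
    rw [mul_zero] at hcomp
    have e1 : (∫ σ in Set.Ioi (0:ℝ), (Real.exp (-(t/2*σ)) / Real.sqrt (t/2*σ)) • G ((t/2*σ) * 2) x)
        = ∫ σ in Set.Ioi (0:ℝ), (Real.sqrt (t/2))⁻¹ • h₂ σ :=
      setIntegral_congr_fun measurableSet_Ioi hceq
    have e2 : (t/2)⁻¹ • (∫ s in Set.Ioi (0:ℝ), (Real.exp (-s) / Real.sqrt s) • G (s * 2) x)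
        = (Real.sqrt (t/2))⁻¹ • ∫ σ in Set.Ioi (0:ℝ), h₂ σ := by
      calc (t/2)⁻¹ • (∫ s in Set.Ioi (0:ℝ), (Real.exp (-s) / Real.sqrt s) • G (s * 2) x)
          = ∫ σ in Set.Ioi (0:ℝ), (Real.exp (-(t/2*σ)) / Real.sqrt (t/2*σ)) • G ((t/2*σ) * 2) x :=
            hcomp.symm
        _ = ∫ σ in Set.Ioi (0:ℝ), (Real.sqrt (t/2))⁻¹ • h₂ σ := e1
        _ = (Real.sqrt (t/2))⁻¹ • ∫ σ in Set.Ioi (0:ℝ), h₂ σ := integral_smul _ _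
    calc ∫ s in Set.Ioi (0:ℝ), (Real.exp (-s) / Real.sqrt s) • G (s * 2) x
        = (t/2) • ((t/2)⁻¹ • ∫ s in Set.Ioi (0:ℝ), (Real.exp (-s) / Real.sqrt s) • G (s * 2) x) := by
          rw [smul_smul, mul_inv_cancel₀ hc.ne', one_smul]
      _ = (t/2) • ((Real.sqrt (t/2))⁻¹ • ∫ σ in Set.Ioi (0:ℝ), h₂ σ) := by rw [e2]
      _ = Real.sqrt (t/2) • ∫ σ in Set.Ioi (0:ℝ), h₂ σ := by
          rw [smul_smul]
          congr 1
          rw [← div_eq_mul_inv, Real.div_sqrt]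
  have hQ2x : Q 2 x = (Real.sqrt π)⁻¹ • (Real.sqrt (t/2) • ∫ σ in Set.Ioi (0:ℝ), h₂ σ) := by
    rw [hQ 2 one_lt_two x, hCOV]
  have hnormh₂ : (Real.sqrt π)⁻¹ * ‖∫ σ in Set.Ioi (0:ℝ), h₂ σ‖
      = (Real.sqrt (t/2))⁻¹ * ‖Q 2 x‖ := by
    rw [hQ2x, norm_smul, norm_smul, Real.norm_eq_abs, Real.norm_eq_abs,
      abs_of_nonneg (inv_nonneg.mpr hπpos.le), abs_of_nonneg hs2pos.le]
    field_simp
  -- splitting the difference integral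
  have htinv : (0:ℝ) < 1/t := by positivity
  have hsplitset : Set.Ioc (0:ℝ) (1/t) ∪ Set.Ioi (1/t) = Set.Ioi 0 :=
    Set.Ioc_union_Ioi_eq_Ioi htinv.le
  have hdint : IntegrableOn (fun σ => ‖h₁ σ - h₂ σ‖) (Set.Ioi 0) volume := (hint.sub h₂int).norm
  have hIocsub : Set.Ioc (0:ℝ) (1/t) ⊆ Set.Ioi 0 := fun σ hσ => hσ.1
  have hIoisub : Set.Ioi (1/t) ⊆ Set.Ioi (0:ℝ) := Set.Ioi_subset_Ioi htinv.le
  -- pointwise bound on the small part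
  have hptsmall : ∀ σ ∈ Set.Ioc (0:ℝ) (1/t),
      ‖h₁ σ - h₂ σ‖ ≤ Real.exp 1 * C / 2 * Real.sqrt t * ‖x‖ := by
    intro σ hσ
    obtain ⟨hσ0, hσ1⟩ := hσ
    have hsq : (0:ℝ) < Real.sqrt σ := Real.sqrt_pos.mpr hσ0
    have hst : (0:ℝ) < Real.sqrt t := Real.sqrt_pos.mpr ht0
    have hσt1 : σ * t ≤ 1 := by
      rw [le_div_iff₀ ht0] at hσ1; linarith
    have hdiff : h₁ σ - h₂ σ
        = ((Real.exp (-σ) - Real.exp (-((t/2)*σ)))/Real.sqrt σ) • v σ := by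
      simp only [hh₁def, hh₂def]
      rw [← sub_smul, div_sub_div_same]
    rw [hdiff, norm_smul, Real.norm_eq_abs, abs_div, abs_of_nonneg hsq.le]
    have habs : |Real.exp (-σ) - Real.exp (-((t/2)*σ))| ≤ (t/2)*σ := by
      refine (abs_exp_neg_sub' hσ0.le (by positivity)).trans ?_
      rw [show σ - (t/2)*σ = σ*(1-t/2) by ring, abs_mul, abs_of_nonneg hσ0.le]
      have h12 : |1 - t/2| ≤ t/2 := by rw [abs_le]; constructor <;> linarith
      nlinarith
    have hvb : ‖v σ‖ ≤ C * (Real.sqrt σ * Real.sqrt t)⁻¹ * Real.exp 1 * ‖x‖ := by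
      refine (hvsmall σ hσ0).trans ?_
      have hee : Real.exp (σ*t) ≤ Real.exp 1 := Real.exp_le_exp.mpr hσt1
      have h0 : (0:ℝ) ≤ C * (Real.sqrt σ * Real.sqrt t)⁻¹ := by positivity
      nlinarith [norm_nonneg x, mul_nonneg h0 (norm_nonneg x)]
    calc |Real.exp (-σ) - Real.exp (-((t/2)*σ))| / Real.sqrt σ * ‖v σ‖
        ≤ ((t/2)*σ/Real.sqrt σ) * (C * (Real.sqrt σ * Real.sqrt t)⁻¹ * Real.exp 1 * ‖x‖) := by
          apply mul_le_mul (div_le_div_of_nonneg_right habs hsq.le) hvb (norm_nonneg _)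
            (by positivity)
      _ = Real.exp 1 * C / 2 * Real.sqrt t * ‖x‖ := by
          rw [mul_inv]
          have e1 : (t/2)*σ/Real.sqrt σ = (t/2)*Real.sqrt σ := by
            rw [mul_div_assoc, Real.div_sqrt]
          rw [e1]
          have e2 : Real.sqrt σ * (Real.sqrt σ)⁻¹ = 1 := mul_inv_cancel₀ hsq.ne'
          have e3 : t * (Real.sqrt t)⁻¹ = Real.sqrt t := by
            rw [← div_eq_mul_inv, Real.div_sqrt]
          calc (t/2)*Real.sqrt σ * (C * ((Real.sqrt σ)⁻¹ * (Real.sqrt t)⁻¹) * Real.exp 1 * ‖x‖)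
              = (Real.sqrt σ * (Real.sqrt σ)⁻¹) * (t * (Real.sqrt t)⁻¹) * C * Real.exp 1 * ‖x‖ / 2 := by
                ring
            _ = Real.exp 1 * C / 2 * Real.sqrt t * ‖x‖ := by rw [e2, e3]; ring
  -- integral bound on the small part
  have hIoc_meas : volume (Set.Ioc (0:ℝ) (1/t)) < ⊤ := by
    rw [Real.volume_Ioc]; exact ENNReal.ofReal_lt_top
  have bound1 : ∫ σ in Set.Ioc (0:ℝ) (1/t), ‖h₁ σ - h₂ σ‖
      ≤ Real.exp 1 * C / 2 * t^(-(1/2):ℝ) * ‖x‖ := by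
    calc ∫ σ in Set.Ioc (0:ℝ) (1/t), ‖h₁ σ - h₂ σ‖
        ≤ ∫ _σ in Set.Ioc (0:ℝ) (1/t), (Real.exp 1 * C / 2 * Real.sqrt t * ‖x‖) :=
          setIntegral_mono_on (hdint.mono_set hIocsub)
            (integrableOn_const hIoc_meas.ne) measurableSet_Ioc hptsmall
      _ = (1/t) * (Real.exp 1 * C / 2 * Real.sqrt t * ‖x‖) := by
          rw [setIntegral_const, measureReal_def, Real.volume_Ioc, sub_zero,
            ENNReal.toReal_ofReal htinv.le, smul_eq_mul]
      _ = Real.exp 1 * C / 2 * (Real.sqrt t / t) * ‖x‖ := by ring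
      _ = Real.exp 1 * C / 2 * t^(-(1/2):ℝ) * ‖x‖ := by
          rw [Real.sqrt_div_self', one_div, hsqrt_inv]
  -- pointwise bound on the large part
  have hptbig : ∀ σ ∈ Set.Ioi (1/t),
      ‖h₁ σ - h₂ σ‖ ≤ (2*C^2*t^(-ν)*‖x‖) * gam σ := by
    intro σ hσ
    have hσ0 : (0:ℝ) < σ := lt_trans htinv hσ
    have hsq : (0:ℝ) < Real.sqrt σ := Real.sqrt_pos.mpr hσ0
    have hvb := hvbig σ hσ
    have hh1 : ‖h₁ σ‖ ≤ Real.exp (-(σ/2)) / Real.sqrt σ * ‖v σ‖ := by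
      simp only [hh₁def, norm_smul, Real.norm_eq_abs, abs_div,
        abs_of_nonneg (Real.exp_pos _).le, abs_of_nonneg hsq.le]
      apply mul_le_mul_of_nonneg_right _ (norm_nonneg _)
      apply div_le_div_of_nonneg_right (Real.exp_le_exp.mpr (by linarith)) hsq.le
    have hh2 : ‖h₂ σ‖ ≤ Real.exp (-(σ/2)) / Real.sqrt σ * ‖v σ‖ := by
      simp only [hh₂def, norm_smul, Real.norm_eq_abs, abs_div,
        abs_of_nonneg (Real.exp_pos _).le, abs_of_nonneg hsq.le]
      apply mul_le_mul_of_nonneg_right _ (norm_nonneg _)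
      apply div_le_div_of_nonneg_right (Real.exp_le_exp.mpr (by nlinarith)) hsq.le
    have e4 : (Real.sqrt σ)⁻¹ * σ^(-ν) = σ^(-(1/2:ℝ)-ν) := by
      rw [show (Real.sqrt σ)⁻¹ = σ ^ (-(1/2):ℝ) from by
        rw [Real.sqrt_eq_rpow, ← Real.rpow_neg hσ0.le], ← Real.rpow_add hσ0]
      congr 1
    calc ‖h₁ σ - h₂ σ‖ ≤ ‖h₁ σ‖ + ‖h₂ σ‖ := norm_sub_le _ _
      _ ≤ 2 * (Real.exp (-(σ/2)) / Real.sqrt σ) * ‖v σ‖ := by linarith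
      _ ≤ 2 * (Real.exp (-(σ/2)) / Real.sqrt σ) * (C^2 * (σ^(-ν) * t^(-ν)) * ‖x‖) := by
          apply mul_le_mul_of_nonneg_left hvb (by positivity)
      _ = (2*C^2*t^(-ν)*‖x‖) * gam σ := by
          simp only [hgamdef]
          rw [div_eq_mul_inv, ← e4]
          ring
  -- integral bound on the large part
  have hgamK : IntegrableOn (fun σ => (2*C^2*t^(-ν)*‖x‖) * gam σ) (Set.Ioi (1/t)) volume :=
    (hgamint.mono_set hIoisub).const_mul _
  have bound2 : ∫ σ in Set.Ioi (1/t), ‖h₁ σ - h₂ σ‖ ≤ 2*C^2*t^(-ν)*‖x‖ * J := by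
    calc ∫ σ in Set.Ioi (1/t), ‖h₁ σ - h₂ σ‖
        ≤ ∫ σ in Set.Ioi (1/t), (2*C^2*t^(-ν)*‖x‖) * gam σ :=
          setIntegral_mono_on (hdint.mono_set hIoisub) hgamK measurableSet_Ioi hptbig
      _ ≤ ∫ σ in Set.Ioi (0:ℝ), (2*C^2*t^(-ν)*‖x‖) * gam σ := by
          apply setIntegral_mono_set (hgamint.const_mul _) ?_
            (HasSubset.Subset.eventuallyLE hIoisub)
          filter_upwards [ae_restrict_mem measurableSet_Ioi] with σ hσ
          have hσ0 : (0:ℝ) < σ := hσ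
          simp only [hgamdef]
          positivity
      _ = 2*C^2*t^(-ν)*‖x‖ * J := by
          rw [hJdef, integral_const_mul]
  -- assembling
  have hsum : ∫ σ in Set.Ioi (0:ℝ), ‖h₁ σ - h₂ σ‖
      = (∫ σ in Set.Ioc (0:ℝ) (1/t), ‖h₁ σ - h₂ σ‖) + ∫ σ in Set.Ioi (1/t), ‖h₁ σ - h₂ σ‖ := by
    rw [← hsplitset]
    exact setIntegral_union (Set.Ioc_disjoint_Ioi le_rfl) measurableSet_Ioi
      (hdint.mono_set hIocsub) (hdint.mono_set hIoisub)
  have hQtx2 : Q t x = (Real.sqrt π)⁻¹ • (∫ σ in Set.Ioi (0:ℝ), (h₁ σ - h₂ σ))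
      + (Real.sqrt π)⁻¹ • ∫ σ in Set.Ioi (0:ℝ), h₂ σ := by
    rw [hQt, ← smul_add, integral_sub hint h₂int, sub_add_cancel]
  have hs2bound : (Real.sqrt (t/2))⁻¹ ≤ Real.sqrt 2 * t^(-ν) := by
    have e5 : Real.sqrt (t/2) = Real.sqrt t / Real.sqrt 2 := Real.sqrt_div ht0.le 2
    have hst : (0:ℝ) < Real.sqrt t := Real.sqrt_pos.mpr ht0
    have h2p : (0:ℝ) < Real.sqrt 2 := by positivity
    rw [e5, inv_div, div_eq_mul_inv, hsqrt_inv]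
    exact mul_le_mul_of_nonneg_left hChalf h2p.le
  have hintnorm_nonneg : (0:ℝ) ≤ ∫ σ in Set.Ioi (0:ℝ), ‖h₁ σ - h₂ σ‖ :=
    integral_nonneg (fun σ => norm_nonneg _)
  calc ‖Q t x‖ ≤ (Real.sqrt π)⁻¹ * ‖∫ σ in Set.Ioi (0:ℝ), (h₁ σ - h₂ σ)‖
        + (Real.sqrt π)⁻¹ * ‖∫ σ in Set.Ioi (0:ℝ), h₂ σ‖ := by
        rw [hQtx2]
        refine (norm_add_le _ _).trans (le_of_eq ?_)
        rw [norm_smul, norm_smul, Real.norm_eq_abs, abs_of_nonneg (inv_nonneg.mpr hπpos.le)]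
    _ ≤ 1 * (∫ σ in Set.Ioi (0:ℝ), ‖h₁ σ - h₂ σ‖) + (Real.sqrt (t/2))⁻¹ * ‖Q 2 x‖ := by
        apply add_le_add
        · exact mul_le_mul (inv_le_one_of_one_le₀ hπ1)
            (norm_integral_le_integral_norm _) (norm_nonneg _) zero_le_one
        · exact le_of_eq hnormh₂
    _ ≤ (Real.exp 1 * C / 2 * t^(-(1/2):ℝ) * ‖x‖ + 2*C^2*t^(-ν)*‖x‖*J)
        + (Real.sqrt 2 * t^(-ν)) * (N * ‖x‖) := by
        apply add_le_add
        · rw [one_mul, hsum]; exact add_le_add bound1 bound2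
        · calc (Real.sqrt (t/2))⁻¹ * ‖Q 2 x‖ ≤ (Real.sqrt (t/2))⁻¹ * (N * ‖x‖) := by
                apply mul_le_mul_of_nonneg_left _ (inv_nonneg.mpr hs2pos.le)
                exact (Q 2).le_opNorm x
            _ ≤ (Real.sqrt 2 * t^(-ν)) * (N * ‖x‖) := by
                apply mul_le_mul_of_nonneg_right hs2bound
                exact mul_nonneg hN0 (norm_nonneg x)
    _ ≤ (A + 1) * t^(-ν) * ‖x‖ := by
        have k1 : Real.exp 1 * C / 2 * t^(-(1/2):ℝ) * ‖x‖
            ≤ Real.exp 1 * C / 2 * t^(-ν) * ‖x‖ := by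
          apply mul_le_mul_of_nonneg_right _ (norm_nonneg x)
          exact mul_le_mul_of_nonneg_left hChalf (by positivity)
        have hslack : (0:ℝ) ≤ t^(-ν) * ‖x‖ := mul_nonneg htν.le (norm_nonneg x)
        rw [hAdef]
        nlinarith [k1, hslack]
end
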